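/- arXiv:2007.14764 — 3 statements merged into one kernel-verified Lean document; each statement's English description precedes it below -/
import Mathlib

section
/- Let n ≥ 1 and let φ : ℂⁿ → ℝ be a smooth function. Then for every k ∈ {1,…,n} the Wirtinger derivative ∂φ/∂z̄_k is holomorphic on ℂⁿ if and only if there exist a Hermitian n×n matrix (c_{jk}), complex constants α_1,…,α_n, and a real constant γ such that φ(z) = Σ_{j,k=1}^n c_{jk} z_j z̄_k + Re(Σ_{k=1}^n α_k z_k) + γ for all z ∈ ℂⁿ. (Geometrically: the conformally flat Hermitian metric g_{j k̄} = φ^{-1} δ_{jk} on the open set {φ > 0} has holomorphic torsion exactly for these φ.) -/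
open Complex MeasureTheory Finset

noncomputable section

/-- The Wirtinger derivative `∂f/∂z̄ₖ` of a (real-differentiable) function
`f : ℂⁿ → ℂ`, namely `½(∂f/∂xₖ + i ∂f/∂yₖ)`. -/
def wirtZBar {n : ℕ} (f : (Fin n → ℂ) → ℂ) (k : Fin n) (z : Fin n → ℂ) : ℂ :=
  (1 / 2 : ℂ) *
    (fderiv ℝ f z (Pi.single k 1) + Complex.I * fderiv ℝ f z (Pi.single k Complex.I))

/-- The Wirtinger derivative `∂ψ/∂z̄ₖ` of a real-valued function. -/
def wirtZBarR {n : ℕ} (ψ : (Fin n → ℂ) → ℝ) (k : Fin n) (z : Fin n → ℂ) : ℂ :=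
  wirtZBar (fun w => (ψ w : ℂ)) k z

namespace Stmt0Aux

variable {n : ℕ}

lemma single_I (k : Fin n) :
    (Pi.single k Complex.I : Fin n → ℂ)
      = Complex.I • (Pi.single k 1 : Fin n → ℂ) := by
  funext j
  rcases eq_or_ne j k with h | h
  · subst h; simp
  · simp [Pi.single_eq_of_ne h]

lemma single_decomp (k : Fin n) (a : ℂ) :
    (Pi.single k a : Fin n → ℂ)
      = a.re • (Pi.single k 1 : Fin n → ℂ)
        + a.im • (Pi.single k Complex.I : Fin n → ℂ) := by
  funext j
  rcases eq_or_ne j k with h | h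
  · subst h; simp [Complex.real_smul, Complex.re_add_im]
  · simp [Pi.single_eq_of_ne h]

/-- A real-linear map on `ℂⁿ` is determined by its values on `eₖ` and `i eₖ`. -/
lemma clm_eq_sum {F : Type*} [NormedAddCommGroup F] [NormedSpace ℝ F]
    (L : (Fin n → ℂ) →L[ℝ] F) (v : Fin n → ℂ) :
    L v = ∑ k, ((v k).re • L (Pi.single k 1) + (v k).im • L (Pi.single k Complex.I)) := by
  conv_lhs => rw [← Finset.univ_sum_single v, map_sum]
  refine Finset.sum_congr rfl fun k _ => ?_
  rw [single_decomp k (v k), map_add, L.map_smul, L.map_smul]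

/-- Cauchy–Riemann on the basis implies complex differentiability. -/
lemma differentiable_of_cr {f : (Fin n → ℂ) → ℂ} (hf : Differentiable ℝ f)
    (hcr : ∀ z k, fderiv ℝ f z (Pi.single k Complex.I)
      = Complex.I * fderiv ℝ f z (Pi.single k 1)) :
    Differentiable ℂ f := by
  intro z
  set L := fderiv ℝ f z with hL
  have hI : ∀ v : Fin n → ℂ, L (Complex.I • v) = Complex.I * L v := by
    intro v
    rw [clm_eq_sum L (Complex.I • v), clm_eq_sum L v]
    have hre : ∀ k, ((Complex.I • v) k).re = -(v k).im := by intro k; simp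
    have him : ∀ k, ((Complex.I • v) k).im = (v k).re := by intro k; simp
    rw [Finset.mul_sum]
    refine Finset.sum_congr rfl fun k _ => ?_
    rw [hre, him, hcr z k]
    simp only [Complex.real_smul]
    push_cast
    linear_combination (-((v k).im : ℂ) * L (Pi.single k 1)) * Complex.I_mul_I
  have hsm : ∀ (c : ℂ) (v : Fin n → ℂ), L (c • v) = c * L v := by
    intro c v
    have hv : c • v = c.re • v + c.im • (Complex.I • v) := by
      funext j
      simp only [Pi.smul_apply, Pi.add_apply, smul_eq_mul, Complex.real_smul,
        smul_smul]
      linear_combination (-(v j)) * Complex.re_add_im c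
    rw [hv, map_add, L.map_smul, L.map_smul, hI]
    simp only [Complex.real_smul]
    linear_combination (L v) * Complex.re_add_im c
  refine (differentiableAt_iff_restrictScalars ℝ (hf z)).2 ⟨⟨⟨⟨L, L.map_add⟩, ?_⟩, L.cont⟩, ?_⟩
  · intro c v
    simpa using hsm c v
  · ext v
    rfl

/-- Complex differentiability gives the Cauchy–Riemann relation. -/
lemma cr_of_holo {f : (Fin n → ℂ) → ℂ} (hf : Differentiable ℂ f)
    (z v : Fin n → ℂ) :
    fderiv ℝ f z (Complex.I • v) = Complex.I * fderiv ℝ f z v := by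
  rw [((hf z).hasFDerivAt.restrictScalars ℝ).fderiv]
  simp only [ContinuousLinearMap.coe_restrictScalars']
  rw [(fderiv ℂ f z).map_smul]
  simp [smul_eq_mul]

lemma wirtZBar_of_holo {f : (Fin n → ℂ) → ℂ} (hf : Differentiable ℂ f)
    (k : Fin n) (z : Fin n → ℂ) : wirtZBar f k z = 0 := by
  unfold wirtZBar
  rw [single_I, cr_of_holo hf]
  linear_combination (1 / 2 * fderiv ℝ f z (Pi.single k 1)) * Complex.I_mul_I

/-- Entire with entire conjugate implies constant. -/
lemma const_of_holo_conj_holo {f : (Fin n → ℂ) → ℂ}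
    (hf : Differentiable ℂ f)
    (hcf : Differentiable ℂ (fun z => (starRingEnd ℂ) (f z))) (z : Fin n → ℂ) :
    f z = f 0 := by
  have hdr : Differentiable ℝ f := fun x => (hf x).restrictScalars ℝ
  have hkey : ∀ x : Fin n → ℂ, fderiv ℝ f x = 0 := by
    intro x
    have hconj : ∀ v, fderiv ℝ (fun z => (starRingEnd ℂ) (f z)) x v
        = (starRingEnd ℂ) (fderiv ℝ f x v) := by
      intro v
      have : HasFDerivAt (fun z => (starRingEnd ℂ) (f z))
          ((Complex.conjCLE.toContinuousLinearMap).comp (fderiv ℝ f x)) x := by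
        exact (Complex.conjCLE.toContinuousLinearMap.hasFDerivAt).comp x (hdr x).hasFDerivAt
      rw [this.fderiv]
      rfl
    ext v
    have h1 : fderiv ℝ f x (Complex.I • v) = Complex.I * fderiv ℝ f x v :=
      cr_of_holo hf x v
    have h2 : fderiv ℝ (fun z => (starRingEnd ℂ) (f z)) x (Complex.I • v)
        = Complex.I * fderiv ℝ (fun z => (starRingEnd ℂ) (f z)) x v :=
      cr_of_holo hcf x v
    rw [hconj, hconj, h1] at h2
    -- h2 : conj (I * w) = I * conj w
    simp only [map_mul, Complex.conj_I, neg_mul] at h2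
    -- h2 : -(I * conj w) = I * conj w
    have h3 : Complex.I * (starRingEnd ℂ) (fderiv ℝ f x v) = 0 :=
      neg_eq_self.1 h2
    have h4 : (starRingEnd ℂ) (fderiv ℝ f x v) = 0 := by
      rcases mul_eq_zero.1 h3 with h | h
      · exact absurd h Complex.I_ne_zero
      · exact h
    have h5 : fderiv ℝ f x v = 0 := by
      have := congrArg (starRingEnd ℂ) h4
      simpa using this
    simpa using h5
  have := is_const_of_fderiv_eq_zero hdr hkey z 0
  simpa using this


section Calc

variable {F : Type*} [NormedAddCommGroup F] [NormedSpace ℝ F]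

lemma diff_fderiv {f : (Fin n → ℂ) → F} (hf : ContDiff ℝ (⊤ : ℕ∞) f) :
    Differentiable ℝ (fderiv ℝ f) :=
  (hf.fderiv_right (m := (⊤ : ℕ∞)) (by simp)).differentiable (by simp)

lemma contDiff_dirderiv {f : (Fin n → ℂ) → F} (hf : ContDiff ℝ (⊤ : ℕ∞) f)
    (v : Fin n → ℂ) :
    ContDiff ℝ (⊤ : ℕ∞) (fun z => fderiv ℝ f z v) :=
  (hf.fderiv_right (m := (⊤ : ℕ∞)) (by simp)).clm_apply contDiff_const

variable {f : (Fin n → ℂ) → ℂ}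

lemma contDiff_wirt (hf : ContDiff ℝ (⊤ : ℕ∞) f) (k : Fin n) :
    ContDiff ℝ (⊤ : ℕ∞) (wirtZBar f k) := by
  unfold wirtZBar
  exact contDiff_const.mul ((contDiff_dirderiv hf _).add
    (contDiff_const.mul (contDiff_dirderiv hf _)))

lemma fderiv_dirderiv {f : (Fin n → ℂ) → F} (hf : ContDiff ℝ (⊤ : ℕ∞) f)
    (v z w : Fin n → ℂ) :
    fderiv ℝ (fun y => fderiv ℝ f y v) z w = fderiv ℝ (fderiv ℝ f) z w v := by
  rw [fderiv_clm_apply (diff_fderiv hf z) (differentiableAt_const v)]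
  simp

lemma snd_symm {f : (Fin n → ℂ) → F} (hf : ContDiff ℝ (⊤ : ℕ∞) f) (z v w : Fin n → ℂ) :
    fderiv ℝ (fderiv ℝ f) z v w = fderiv ℝ (fderiv ℝ f) z w v :=
  second_derivative_symmetric
    (f' := fderiv ℝ f)
    (fun y => ((hf.differentiable (by simp)) y).hasFDerivAt)
    ((diff_fderiv hf z).hasFDerivAt) v w

lemma fderiv_wirt (hf : ContDiff ℝ (⊤ : ℕ∞) f) (k : Fin n) (z w : Fin n → ℂ) :
    fderiv ℝ (wirtZBar f k) z w
      = (1 / 2 : ℂ) * (fderiv ℝ (fderiv ℝ f) z w (Pi.single k 1)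
          + Complex.I * fderiv ℝ (fderiv ℝ f) z w (Pi.single k Complex.I)) := by
  have hA : DifferentiableAt ℝ (fun y => fderiv ℝ f y (Pi.single k 1)) z :=
    ((contDiff_dirderiv hf _).differentiable (by simp)).differentiableAt
  have hB : DifferentiableAt ℝ (fun y => fderiv ℝ f y (Pi.single k Complex.I)) z :=
    ((contDiff_dirderiv hf _).differentiable (by simp)).differentiableAt
  unfold wirtZBar
  rw [fderiv_const_mul (hA.fun_add (hB.const_mul _)), fderiv_fun_add hA (hB.const_mul _),
    fderiv_const_mul hB]
  simp only [ContinuousLinearMap.coe_smul', Pi.smul_apply, ContinuousLinearMap.add_apply,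
    smul_eq_mul]
  rw [fderiv_dirderiv hf _ z w, fderiv_dirderiv hf _ z w]

lemma dirderiv_entire (hf : ContDiff ℝ (⊤ : ℕ∞) f) (hol : Differentiable ℂ f)
    (v : Fin n → ℂ) : Differentiable ℂ (fun z => fderiv ℝ f z v) := by
  apply differentiable_of_cr
    ((contDiff_dirderiv hf v).differentiable (by simp))
  intro z k
  rw [fderiv_dirderiv hf v z _, fderiv_dirderiv hf v z _,
    snd_symm hf z _ v, snd_symm hf z _ v]
  have hfun : (fun y => fderiv ℝ f y (Pi.single k Complex.I))
      = fun y => Complex.I * fderiv ℝ f y (Pi.single k 1) := by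
    funext y; rw [single_I, cr_of_holo hol]
  have hB : DifferentiableAt ℝ (fun y => fderiv ℝ f y (Pi.single k 1)) z :=
    ((contDiff_dirderiv hf _).differentiable (by simp)).differentiableAt
  rw [← fderiv_dirderiv hf _ z v, hfun, fderiv_const_mul hB]
  simp only [ContinuousLinearMap.coe_smul', Pi.smul_apply, smul_eq_mul]
  rw [fderiv_dirderiv hf _ z v]

lemma fderiv_ofReal_comp {ψ : (Fin n → ℂ) → ℝ} (hψ : Differentiable ℝ ψ)
    (y : Fin n → ℂ) :
    fderiv ℝ (fun w => ((ψ w : ℝ) : ℂ)) y = Complex.ofRealCLM.comp (fderiv ℝ ψ y) := by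
  have h := (Complex.ofRealCLM.hasFDerivAt (x := ψ y)).comp y (hψ y).hasFDerivAt
  have e1 : (fun w => ((ψ w : ℝ) : ℂ)) = (⇑Complex.ofRealCLM ∘ ψ) := by
    funext w; simp
  rw [e1]
  exact h.fderiv

lemma real_const_of_wirt_zero {ψ : (Fin n → ℂ) → ℝ} (hψ : Differentiable ℝ ψ)
    (h0 : ∀ (k : Fin n) (z : Fin n → ℂ), wirtZBarR ψ k z = 0) (z : Fin n → ℂ) :
    ψ z = ψ 0 := by
  apply is_const_of_fderiv_eq_zero hψ
  intro x
  have hvals : ∀ k : Fin n, fderiv ℝ ψ x (Pi.single k 1) = 0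
      ∧ fderiv ℝ ψ x (Pi.single k Complex.I) = 0 := by
    intro k
    have h := h0 k x
    unfold wirtZBarR wirtZBar at h
    rw [fderiv_ofReal_comp hψ] at h
    simp only [ContinuousLinearMap.coe_comp', Function.comp_apply,
      Complex.ofRealCLM_apply] at h
    constructor
    · have := congrArg Complex.re h
      simp at this
      tauto
    · have := congrArg Complex.im h
      simp at this
      tauto
  ext v
  rw [clm_eq_sum (fderiv ℝ ψ x) v]
  simp [(hvals _).1, (hvals _).2]

end Calc


section Poly

/-- Derivative data for `y ↦ a * y j`. -/
lemma linmono_fderiv (a : ℂ) (j : Fin n) (z : Fin n → ℂ) :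
    DifferentiableAt ℝ (fun y : Fin n → ℂ => a * y j) z ∧
      ∀ v, fderiv ℝ (fun y : Fin n → ℂ => a * y j) z v = a * v j := by
  have hP : HasFDerivAt (fun y : Fin n → ℂ => y j)
      (ContinuousLinearMap.proj (R := ℝ) (φ := fun _ : Fin n => ℂ) j) z :=
    by
      have := (ContinuousLinearMap.proj (R := ℝ) (φ := fun _ : Fin n => ℂ) j).hasFDerivAt
        (x := z)
      convert this using 1
      rfl
  have h := hP.const_mul a
  exact ⟨h.differentiableAt, fun v => by rw [h.fderiv]; simp⟩

/-- Derivative data for `y ↦ a * conj (y j)`. -/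
lemma conjmono_fderiv (a : ℂ) (j : Fin n) (z : Fin n → ℂ) :
    DifferentiableAt ℝ (fun y : Fin n → ℂ => a * (starRingEnd ℂ) (y j)) z ∧
      ∀ v, fderiv ℝ (fun y : Fin n → ℂ => a * (starRingEnd ℂ) (y j)) z v
        = a * (starRingEnd ℂ) (v j) := by
  have hP : HasFDerivAt (fun y : Fin n → ℂ => y j)
      (ContinuousLinearMap.proj (R := ℝ) (φ := fun _ : Fin n => ℂ) j) z :=
    by
      have := (ContinuousLinearMap.proj (R := ℝ) (φ := fun _ : Fin n => ℂ) j).hasFDerivAt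
        (x := z)
      convert this using 1
      rfl
  have hQ0 := Complex.conjCLE.toContinuousLinearMap.hasFDerivAt (x := z j)
  have hQ : HasFDerivAt (fun y : Fin n → ℂ => (starRingEnd ℂ) (y j))
      (Complex.conjCLE.toContinuousLinearMap.comp (ContinuousLinearMap.proj j)) z := by
    refine (hQ0.comp z hP).congr_of_eventuallyEq ?_
    exact Filter.Eventually.of_forall fun y => by simp
  have h := hQ.const_mul a
  exact ⟨h.differentiableAt, fun v => by rw [h.fderiv]; simp⟩

/-- Derivative data for `y ↦ a * y j * conj (y k)`. -/
lemma mono_fderiv (a : ℂ) (j k : Fin n) (z : Fin n → ℂ) :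
    DifferentiableAt ℝ (fun y : Fin n → ℂ => a * y j * (starRingEnd ℂ) (y k)) z ∧
      ∀ v, fderiv ℝ (fun y : Fin n → ℂ => a * y j * (starRingEnd ℂ) (y k)) z v
        = a * v j * (starRingEnd ℂ) (z k) + a * z j * (starRingEnd ℂ) (v k) := by
  have hP : HasFDerivAt (fun y : Fin n → ℂ => y j)
      (ContinuousLinearMap.proj (R := ℝ) (φ := fun _ : Fin n => ℂ) j) z :=
    by
      have := (ContinuousLinearMap.proj (R := ℝ) (φ := fun _ : Fin n => ℂ) j).hasFDerivAt
        (x := z)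
      convert this using 1
      rfl
  have hPk : HasFDerivAt (fun y : Fin n → ℂ => y k)
      (ContinuousLinearMap.proj (R := ℝ) (φ := fun _ : Fin n => ℂ) k) z :=
    by
      have := (ContinuousLinearMap.proj (R := ℝ) (φ := fun _ : Fin n => ℂ) k).hasFDerivAt
        (x := z)
      convert this using 1
      rfl
  have hQ0 := Complex.conjCLE.toContinuousLinearMap.hasFDerivAt (x := z k)
  have hQ : HasFDerivAt (fun y : Fin n → ℂ => (starRingEnd ℂ) (y k))
      (Complex.conjCLE.toContinuousLinearMap.comp (ContinuousLinearMap.proj k)) z := by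
    refine (hQ0.comp z hPk).congr_of_eventuallyEq ?_
    exact Filter.Eventually.of_forall fun y => by simp
  have h := (hP.const_mul a).fun_mul hQ
  refine ⟨h.differentiableAt, fun v => ?_⟩
  rw [h.fderiv]
  simp
  ring

end Poly


/-- Wirtinger derivative of a Hermitian-quadratic-plus-linear real polynomial. -/
lemma wirt_poly (c : Matrix (Fin n) (Fin n) ℂ) (α : Fin n → ℂ) (γ : ℝ)
    (ψ : (Fin n → ℂ) → ℝ)
    (hψ : ∀ z : Fin n → ℂ,
      ((ψ z : ℝ) : ℂ) = (∑ j, ∑ k, c j k * z j * (starRingEnd ℂ) (z k))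
        + (((∑ k, α k * z k).re : ℝ) : ℂ) + (γ : ℂ))
    (k : Fin n) (z : Fin n → ℂ) :
    wirtZBarR ψ k z = (∑ j, c j k * z j) + (1 / 2 : ℂ) * (starRingEnd ℂ) (α k) := by
  have hre : ∀ w : ℂ, ((w.re : ℝ) : ℂ) = (1 / 2 : ℂ) * (w + (starRingEnd ℂ) w) := by
    intro w; rw [Complex.add_conj]; push_cast; ring
  have hfun : (fun w => ((ψ w : ℝ) : ℂ))
      = fun y : Fin n → ℂ =>
          (∑ j, ∑ k', c j k' * y j * (starRingEnd ℂ) (y k'))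
            + (1 / 2 : ℂ) * ((∑ k', α k' * y k')
                + (∑ k', (starRingEnd ℂ) (α k') * (starRingEnd ℂ) (y k'))) + (γ : ℂ) := by
    funext y
    rw [hψ y, hre, map_sum]
    simp only [map_mul]
  have hSd : DifferentiableAt ℝ
      (fun y : Fin n → ℂ => ∑ j, ∑ k', c j k' * y j * (starRingEnd ℂ) (y k')) z :=
    DifferentiableAt.fun_sum fun j _ => DifferentiableAt.fun_sum fun k' _ => (mono_fderiv _ _ _ z).1
  have hlind : DifferentiableAt ℝ (fun y : Fin n → ℂ => ∑ k', α k' * y k') z :=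
    DifferentiableAt.fun_sum fun k' _ => (linmono_fderiv _ _ z).1
  have hcond : DifferentiableAt ℝ
      (fun y : Fin n → ℂ => ∑ k', (starRingEnd ℂ) (α k') * (starRingEnd ℂ) (y k')) z :=
    DifferentiableAt.fun_sum fun k' _ => (conjmono_fderiv _ _ z).1
  have hD : ∀ v : Fin n → ℂ,
      fderiv ℝ (fun y : Fin n → ℂ =>
        (∑ j, ∑ k', c j k' * y j * (starRingEnd ℂ) (y k'))
          + (1 / 2 : ℂ) * ((∑ k', α k' * y k')
              + (∑ k', (starRingEnd ℂ) (α k') * (starRingEnd ℂ) (y k'))) + (γ : ℂ)) z v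
      = (∑ j, ∑ k', (c j k' * v j * (starRingEnd ℂ) (z k')
            + c j k' * z j * (starRingEnd ℂ) (v k')))
        + (1 / 2 : ℂ) * ((∑ k', α k' * v k')
            + (∑ k', (starRingEnd ℂ) (α k') * (starRingEnd ℂ) (v k'))) := by
    intro v
    rw [fderiv_fun_add (hSd.fun_add ((hlind.fun_add hcond).const_mul _)) (differentiableAt_const _),
      fderiv_fun_const]
    rw [fderiv_fun_add hSd ((hlind.fun_add hcond).const_mul _)]
    rw [fderiv_const_mul (hlind.fun_add hcond)]
    rw [fderiv_fun_add hlind hcond]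
    rw [fderiv_fun_sum (A := fun j (y : Fin n → ℂ) => ∑ k', c j k' * y j * (starRingEnd ℂ) (y k'))
      (fun j _ => DifferentiableAt.fun_sum fun k' _ => (mono_fderiv _ _ _ z).1)]
    rw [fderiv_fun_sum (fun k' _ => (linmono_fderiv _ _ z).1)]
    rw [fderiv_fun_sum (fun k' _ => (conjmono_fderiv _ _ z).1)]
    simp only [ContinuousLinearMap.add_apply, ContinuousLinearMap.coe_smul', Pi.smul_apply,
      ContinuousLinearMap.sum_apply, Pi.zero_apply, ContinuousLinearMap.zero_apply, add_zero,
      smul_eq_mul]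
    congr 1
    · refine Finset.sum_congr rfl fun j _ => ?_
      rw [fderiv_fun_sum (A := fun k' (y : Fin n → ℂ) => c j k' * y j * (starRingEnd ℂ) (y k'))
        (fun k' _ => (mono_fderiv _ _ _ z).1)]
      rw [ContinuousLinearMap.sum_apply]
      exact Finset.sum_congr rfl fun k' _ => (mono_fderiv _ _ _ z).2 v
    · congr 1
      congr 1
      · exact Finset.sum_congr rfl fun k' _ => (linmono_fderiv _ _ z).2 v
      · exact Finset.sum_congr rfl fun k' _ => (conjmono_fderiv _ _ z).2 v
  have quad_collapse : ∀ a : ℂ,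
      (∑ j, ∑ k', (c j k' * (Pi.single k a : Fin n → ℂ) j * (starRingEnd ℂ) (z k')
          + c j k' * z j * (starRingEnd ℂ) ((Pi.single k a : Fin n → ℂ) k')))
        = a * (∑ k', c k k' * (starRingEnd ℂ) (z k'))
          + (starRingEnd ℂ) a * (∑ j, c j k * z j) := by
    intro a
    have step1 : (∑ j, ∑ k', (c j k' * (Pi.single k a : Fin n → ℂ) j * (starRingEnd ℂ) (z k')
          + c j k' * z j * (starRingEnd ℂ) ((Pi.single k a : Fin n → ℂ) k')))
        = (∑ j, ∑ k', c j k' * (Pi.single k a : Fin n → ℂ) j * (starRingEnd ℂ) (z k'))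
          + (∑ j, ∑ k', c j k' * z j * (starRingEnd ℂ) ((Pi.single k a : Fin n → ℂ) k')) := by
      rw [← Finset.sum_add_distrib]
      exact Finset.sum_congr rfl fun j _ => Finset.sum_add_distrib
    rw [step1]
    congr 1
    · rw [Finset.sum_comm, Finset.mul_sum]
      refine Finset.sum_congr rfl fun k' _ => ?_
      simp [Pi.single_apply, ite_mul, mul_ite]
      ring
    · rw [Finset.mul_sum]
      refine Finset.sum_congr rfl fun j _ => ?_
      simp [Pi.single_apply, apply_ite (starRingEnd ℂ), mul_ite]
      ring
  have lin_collapse : ∀ a : ℂ,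
      (∑ k', α k' * (Pi.single k a : Fin n → ℂ) k') = α k * a := by
    intro a
    simp [Pi.single_apply, mul_ite, Finset.sum_ite_eq']
  have conj_collapse : ∀ a : ℂ,
      (∑ k', (starRingEnd ℂ) (α k') * (starRingEnd ℂ) ((Pi.single k a : Fin n → ℂ) k'))
        = (starRingEnd ℂ) (α k) * (starRingEnd ℂ) a := by
    intro a
    simp [Pi.single_apply, apply_ite (starRingEnd ℂ), mul_ite, Finset.sum_ite_eq']
  unfold wirtZBarR wirtZBar
  rw [hfun, hD, hD, quad_collapse 1, quad_collapse Complex.I, lin_collapse 1,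
    lin_collapse Complex.I, conj_collapse 1, conj_collapse Complex.I]
  simp only [map_one, Complex.conj_I, one_mul, mul_one]
  linear_combination (((∑ k', c k k' * (starRingEnd ℂ) (z k')) - (∑ j, c j k * z j)) / 2
    + (α k - (starRingEnd ℂ) (α k)) / 4) * Complex.I_mul_I

end Stmt0Aux

/-- for smooth real `φ : ℂⁿ → ℝ`, all the Wirtinger derivatives
`∂φ/∂z̄ₖ` are holomorphic (entire) iff `φ` is a Hermitian quadratic polynomial
`φ(z) = Σ c_{jk} z_j z̄_k + Re Σ α_k z_k + γ`. -/
theorem stmt0 (n : ℕ) (hn : 1 ≤ n) (φ : (Fin n → ℂ) → ℝ)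
    (hφ : ContDiff ℝ (⊤ : ℕ∞) φ) :
    (∀ k : Fin n, Differentiable ℂ (wirtZBarR φ k)) ↔
      ∃ c : Matrix (Fin n) (Fin n) ℂ, c.IsHermitian ∧
        ∃ α : Fin n → ℂ, ∃ γ : ℝ,
          ∀ z : Fin n → ℂ,
            (φ z : ℂ) =
              (∑ j, ∑ k, c j k * z j * (starRingEnd ℂ) (z k)) +
                (((∑ k, α k * z k).re : ℝ) : ℂ) + (γ : ℂ) := by
  open Stmt0Aux in
  constructor
  · intro hall
    set Φ : (Fin n → ℂ) → ℂ := fun w => ((φ w : ℝ) : ℂ) with hΦdef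
    have hφd : Differentiable ℝ φ := hφ.differentiable (by simp)
    have hΦ : ContDiff ℝ (⊤ : ℕ∞) Φ := by
      have e : Φ = ⇑Complex.ofRealCLM ∘ φ := by funext w; simp [hΦdef]
      rw [e]
      exact Complex.ofRealCLM.contDiff.comp hφ
    have hall' : ∀ k, Differentiable ℂ (wirtZBar Φ k) := fun k => hall k
    -- reality of the second derivative of Φ
    have hreal2 : ∀ (z v w : Fin n → ℂ),
        (starRingEnd ℂ) (fderiv ℝ (fderiv ℝ Φ) z v w) = fderiv ℝ (fderiv ℝ Φ) z v w := by
      intro z v w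
      have e2 : fderiv ℝ Φ = fun y =>
          (ContinuousLinearMap.compL ℝ (Fin n → ℂ) ℝ ℂ Complex.ofRealCLM)
            (fderiv ℝ φ y) := by
        funext y
        rw [hΦdef, Stmt0Aux.fderiv_ofReal_comp hφd y]
        rfl
      have hM := (ContinuousLinearMap.compL ℝ (Fin n → ℂ) ℝ ℂ Complex.ofRealCLM).hasFDerivAt
        (x := fderiv ℝ φ z)
      have hd2 : DifferentiableAt ℝ (fderiv ℝ φ) z := (Stmt0Aux.diff_fderiv hφ) z
      have e3 : fderiv ℝ (fderiv ℝ Φ) z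
          = (ContinuousLinearMap.compL ℝ (Fin n → ℂ) ℝ ℂ Complex.ofRealCLM).comp
              (fderiv ℝ (fderiv ℝ φ) z) := by
        rw [e2]
        exact (hM.comp z hd2.hasFDerivAt).fderiv
      rw [e3]
      simp [Complex.conj_ofReal]
    -- key antisymmetry relation
    have key : ∀ (j k : Fin n) (z : Fin n → ℂ),
        fderiv ℝ (fderiv ℝ Φ) z (Pi.single j Complex.I) (Pi.single k 1)
          = -fderiv ℝ (fderiv ℝ Φ) z (Pi.single j 1) (Pi.single k Complex.I) := by
      intro j k z
      have hEq : fderiv ℝ (wirtZBar Φ k) z (Pi.single j Complex.I)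
          = Complex.I * fderiv ℝ (wirtZBar Φ k) z (Pi.single j 1) := by
        rw [Stmt0Aux.single_I]
        exact Stmt0Aux.cr_of_holo (hall' k) z _
      rw [Stmt0Aux.fderiv_wirt hΦ, Stmt0Aux.fderiv_wirt hΦ] at hEq
      have hEq' := congrArg (starRingEnd ℂ) hEq
      simp only [map_mul, map_add, map_div₀, map_one, map_ofNat, Complex.conj_I,
        hreal2] at hEq'
      linear_combination hEq + hEq'
        + (fderiv ℝ (fderiv ℝ Φ) z (Pi.single j 1) (Pi.single k Complex.I)) * Complex.I_mul_I
    -- conjugation rule for derivatives of the Wirtinger derivatives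
    have hconjh : ∀ (j k : Fin n) (z : Fin n → ℂ),
        (starRingEnd ℂ) (fderiv ℝ (wirtZBar Φ k) z (Pi.single j 1))
          = fderiv ℝ (wirtZBar Φ j) z (Pi.single k 1) := by
      intro j k z
      rw [Stmt0Aux.fderiv_wirt hΦ, Stmt0Aux.fderiv_wirt hΦ]
      have s1 : fderiv ℝ (fderiv ℝ Φ) z (Pi.single k 1) (Pi.single j 1)
          = fderiv ℝ (fderiv ℝ Φ) z (Pi.single j 1) (Pi.single k 1) :=
        Stmt0Aux.snd_symm hΦ z _ _
      have s2 : fderiv ℝ (fderiv ℝ Φ) z (Pi.single k 1) (Pi.single j Complex.I)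
          = fderiv ℝ (fderiv ℝ Φ) z (Pi.single j Complex.I) (Pi.single k 1) :=
        Stmt0Aux.snd_symm hΦ z _ _
      have s3 := key j k z
      simp only [map_mul, map_add, map_div₀, map_one, map_ofNat, Complex.conj_I, hreal2]
      rw [s1, s2, s3]
      ring
    -- the derivatives are entire, hence constant
    have hent : ∀ (j k : Fin n), Differentiable ℂ
        (fun z => fderiv ℝ (wirtZBar Φ k) z (Pi.single j 1)) := fun j k =>
      Stmt0Aux.dirderiv_entire (Stmt0Aux.contDiff_wirt hΦ k) (hall' k) _
    have hconst : ∀ (j k : Fin n) (z : Fin n → ℂ),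
        fderiv ℝ (wirtZBar Φ k) z (Pi.single j 1)
          = fderiv ℝ (wirtZBar Φ k) 0 (Pi.single j 1) := by
      intro j k z
      refine Stmt0Aux.const_of_holo_conj_holo (hent j k) ?_ z
      have efun : (fun z => (starRingEnd ℂ) (fderiv ℝ (wirtZBar Φ k) z (Pi.single j 1)))
          = fun z => fderiv ℝ (wirtZBar Φ j) z (Pi.single k 1) :=
        funext fun z => hconjh j k z
      rw [efun]
      exact hent k j
    set c : Matrix (Fin n) (Fin n) ℂ :=
      fun j k => fderiv ℝ (wirtZBar Φ k) 0 (Pi.single j 1) with hcdef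
    have hermEntry : ∀ j k, (starRingEnd ℂ) (c j k) = c k j := fun j k => hconjh j k 0
    have hherm : c.IsHermitian :=
      Matrix.ext fun j k => by rw [Matrix.conjTranspose_apply]; exact hermEntry k j
    -- affine formula for the Wirtinger derivatives
    have hfklin : ∀ (k : Fin n), Differentiable ℝ (fun y : Fin n → ℂ => ∑ j, c j k * y j) :=
      fun k x => DifferentiableAt.fun_sum fun j _ => (Stmt0Aux.linmono_fderiv _ _ x).1
    have hlinval : ∀ (k : Fin n) (x v : Fin n → ℂ),
        fderiv ℝ (fun y : Fin n → ℂ => ∑ j, c j k * y j) x v = ∑ j, c j k * v j := by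
      intro k x v
      rw [fderiv_fun_sum (fun j _ => (Stmt0Aux.linmono_fderiv _ _ x).1),
        ContinuousLinearMap.sum_apply]
      exact Finset.sum_congr rfl fun j _ => (Stmt0Aux.linmono_fderiv _ _ x).2 v
    have haff : ∀ (k : Fin n) (z : Fin n → ℂ),
        wirtZBar Φ k z = wirtZBar Φ k 0 + ∑ j, c j k * z j := by
      intro k z
      have hfk : Differentiable ℝ (wirtZBar Φ k) :=
        (Stmt0Aux.contDiff_wirt hΦ k).differentiable (by simp)
      have hzero : ∀ x, fderiv ℝ (fun y => wirtZBar Φ k y - ∑ j, c j k * y j) x = 0 := by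
        intro x
        rw [fderiv_fun_sub (hfk x) (hfklin k x)]
        ext v
        simp only [ContinuousLinearMap.sub_apply, ContinuousLinearMap.zero_apply]
        rw [sub_eq_zero, hlinval k x v, Stmt0Aux.clm_eq_sum (fderiv ℝ (wirtZBar Φ k) x) v]
        refine Finset.sum_congr rfl fun j _ => ?_
        have hone : fderiv ℝ (wirtZBar Φ k) x (Pi.single j 1) = c j k := hconst j k x
        have hi : fderiv ℝ (wirtZBar Φ k) x (Pi.single j Complex.I)
            = Complex.I * c j k := by
          rw [Stmt0Aux.single_I, Stmt0Aux.cr_of_holo (hall' k) x _, hone]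
        rw [hone, hi]
        simp only [Complex.real_smul]
        linear_combination c j k * Complex.re_add_im (v j)
      have hcg := is_const_of_fderiv_eq_zero (fun x => (hfk x).fun_sub (hfklin k x)) hzero z 0
      simp only [Pi.zero_apply, mul_zero, Finset.sum_const_zero, sub_zero] at hcg
      linear_combination hcg
    set β : Fin n → ℂ := fun k => wirtZBar Φ k 0 with hβdef
    refine ⟨c, hherm, fun k => 2 * (starRingEnd ℂ) (β k), φ 0, ?_⟩
    intro z
    -- reality of the Hermitian quadratic form
    have hSreal : ∀ y : Fin n → ℂ,
        (starRingEnd ℂ) (∑ j, ∑ k, c j k * y j * (starRingEnd ℂ) (y k))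
          = ∑ j, ∑ k, c j k * y j * (starRingEnd ℂ) (y k) := by
      intro y
      simp only [map_sum, map_mul, Complex.conj_conj, hermEntry]
      rw [Finset.sum_comm]
      refine Finset.sum_congr rfl fun j _ => Finset.sum_congr rfl fun k _ => ?_
      ring
    set P : (Fin n → ℂ) → ℂ := fun y =>
      (∑ j, ∑ k, c j k * y j * (starRingEnd ℂ) (y k))
        + (((∑ k, (2 * (starRingEnd ℂ) (β k)) * y k).re : ℝ) : ℂ) + ((φ 0 : ℝ) : ℂ)
      with hPdef
    have hPreal : ∀ y, (((P y).re : ℝ) : ℂ) = P y := by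
      intro y
      refine Complex.conj_eq_iff_re.mp ?_
      rw [hPdef]
      simp only [map_add, hSreal, Complex.conj_ofReal]
    set Xr : (Fin n → ℂ) → ℝ := fun y => (P y).re with hXrdef
    have hX : ∀ y, ((Xr y : ℝ) : ℂ)
        = (∑ j, ∑ k, c j k * y j * (starRingEnd ℂ) (y k))
          + (((∑ k, (2 * (starRingEnd ℂ) (β k)) * y k).re : ℝ) : ℂ) + ((φ 0 : ℝ) : ℂ) :=
      fun y => hPreal y
    have hXw : ∀ (k : Fin n) (y : Fin n → ℂ),
        wirtZBarR Xr k y = (∑ j, c j k * y j) + β k := by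
      intro k y
      rw [Stmt0Aux.wirt_poly c _ (φ 0) Xr hX k y]
      have h2 : (starRingEnd ℂ) (2 * (starRingEnd ℂ) (β k)) = 2 * β k := by
        rw [map_mul, Complex.conj_conj, map_ofNat]
      rw [h2]
      ring
    -- the difference is constant
    set ψ : (Fin n → ℂ) → ℝ := fun y => φ y - Xr y with hψdef
    have hXrC : Differentiable ℝ (fun y => ((Xr y : ℝ) : ℂ)) := by
      rw [funext hX]
      refine Differentiable.add (Differentiable.add ?_ ?_) (differentiable_const _)
      · exact fun x => DifferentiableAt.fun_sum fun j _ =>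
          DifferentiableAt.fun_sum fun k' _ => (Stmt0Aux.mono_fderiv _ _ _ x).1
      · have hlin : Differentiable ℝ
            (fun y : Fin n → ℂ => ∑ k', (2 * (starRingEnd ℂ) (β k')) * y k') :=
          fun x => DifferentiableAt.fun_sum fun k' _ => (Stmt0Aux.linmono_fderiv _ _ x).1
        exact Complex.ofRealCLM.differentiable.comp (Complex.reCLM.differentiable.comp hlin)
    have hXrd : Differentiable ℝ Xr := by
      have e : Xr = fun y => (((Xr y : ℝ) : ℂ)).re := by funext y; simp
      rw [e]
      exact Complex.reCLM.differentiable.comp hXrC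
    have hψd : Differentiable ℝ ψ := hφd.sub hXrd
    have hψw : ∀ (k : Fin n) (y : Fin n → ℂ), wirtZBarR ψ k y = 0 := by
      intro k y
      have e1 : wirtZBar Φ k y = β k + ∑ j, c j k * y j := haff k y
      have e2 : wirtZBarR Xr k y = (∑ j, c j k * y j) + β k := hXw k y
      have ecast : (fun w => ((ψ w : ℝ) : ℂ))
          = fun w => Φ w - ((Xr w : ℝ) : ℂ) := by
        funext w
        rw [hψdef, hΦdef]
        push_cast
        ring
      unfold wirtZBarR wirtZBar
      unfold wirtZBar at e1
      unfold wirtZBarR wirtZBar at e2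
      rw [ecast,
        fderiv_fun_sub ((hΦ.differentiable (by simp)) y) (hXrC y)]
      simp only [ContinuousLinearMap.sub_apply]
      linear_combination e1 - e2
    have hψ0 : ∀ y, ψ y = ψ 0 :=
      Stmt0Aux.real_const_of_wirt_zero hψd (fun k y => hψw k y)
    have hX0 : Xr 0 = φ 0 := by
      rw [hXrdef, hPdef]
      simp
    have hφX : φ z = Xr z := by
      have h := hψ0 z
      rw [hψdef] at h
      simp only [hX0] at h
      linarith [h]
    calc (φ z : ℂ) = ((Xr z : ℝ) : ℂ) := by exact_mod_cast congrArg Complex.ofReal hφX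
      _ = _ := hX z
  · rintro ⟨c, hc, α, γ, hz⟩ k
    have heq : wirtZBarR φ k
        = fun z => (∑ j, c j k * z j) + (1 / 2 : ℂ) * (starRingEnd ℂ) (α k) :=
      funext fun z => Stmt0Aux.wirt_poly c α γ φ hz k z
    rw [heq]
    have h1 : Differentiable ℂ (fun z : Fin n → ℂ => ∑ j, c j k * z j) := by
      apply Differentiable.fun_sum
      intro j _
      have hp : Differentiable ℂ (fun z : Fin n → ℂ => z j) :=
        (ContinuousLinearMap.proj (R := ℂ) (φ := fun _ : Fin n => ℂ) j).differentiable
      exact hp.const_mul _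
    exact h1.add_const _
end
end

section
/- Let n ≥ 1, let 𝔹ⁿ = {z ∈ ℂⁿ : |z| < 1}, and let ψ : 𝔹ⁿ → ℝ be smooth. If for each k ∈ {1,…,n} the function z ↦ (1 − |z|²) ∂ψ/∂z̄_k is holomorphic on 𝔹ⁿ, then there exist real constants A and B such that ψ(z) = A + B log(1 − |z|²) for all z ∈ 𝔹ⁿ. (The hypothesis says that the gradient field (∂̄ψ)^♯ of ψ with respect to the conformally flat metric g_{j k̄} = δ_{jk}/(1 − |z|²) is holomorphic.) -/
open Complex MeasureTheory Finset

open ComplexConjugate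

noncomputable section

/-- `|z|² = Σ |zₖ|²` for `z ∈ ℂⁿ`. -/
def normSq' {n : ℕ} (z : Fin n → ℂ) : ℝ := ∑ i, Complex.normSq (z i)

/-- The open unit ball `𝔹ⁿ ⊂ ℂⁿ`. -/
def unitBall (n : ℕ) : Set (Fin n → ℂ) := {z | normSq' z < 1}





namespace AuxW

variable {n : ℕ}

/-- directional derivative -/
def DD (v : Fin n → ℂ) (f : (Fin n → ℂ) → ℂ) : (Fin n → ℂ) → ℂ :=
  fun z => fderiv ℝ f z v

def EV (k : Fin n) : Fin n → ℂ := Pi.single k 1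
def IV (k : Fin n) : Fin n → ℂ := Pi.single k Complex.I

/-- generic Wirtinger-type operator; `W I` is `∂/∂z̄ₖ`, `W (-I)` is `∂/∂zₖ`. -/
def W (ε : ℂ) (k : Fin n) (f : (Fin n → ℂ) → ℂ) : (Fin n → ℂ) → ℂ :=
  fun z => (1 / 2 : ℂ) * (DD (EV k) f z + ε * DD (IV k) f z)

variable {s : Set (Fin n → ℂ)} {f g : (Fin n → ℂ) → ℂ} {z : Fin n → ℂ}
  {v w : Fin n → ℂ} {ε : ℂ} {k : Fin n}

theorem diffAt (hs : IsOpen s) (hf : ContDiffOn ℝ (⊤:ℕ∞) f s) (hz : z ∈ s) :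
    DifferentiableAt ℝ f z :=
  (hf.contDiffAt (hs.mem_nhds hz)).differentiableAt (by norm_cast)

theorem contDiffOn_DD (hs : IsOpen s) (hf : ContDiffOn ℝ (⊤:ℕ∞) f s) :
    ContDiffOn ℝ (⊤:ℕ∞) (DD v f) s := by
  have h1 : ContDiffOn ℝ (⊤:ℕ∞) (fderiv ℝ f) s :=
    hf.fderiv_of_isOpen hs (by norm_cast)
  have h2 := (ContinuousLinearMap.apply ℝ ℂ v).contDiff (n := ((⊤:ℕ∞):WithTop ℕ∞))
  exact h2.comp_contDiffOn h1

theorem contDiffOn_W (hs : IsOpen s) (hf : ContDiffOn ℝ (⊤:ℕ∞) f s) :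
    ContDiffOn ℝ (⊤:ℕ∞) (W ε k f) s := by
  apply ContDiffOn.mul contDiffOn_const
  exact (contDiffOn_DD hs hf).add (ContDiffOn.mul contDiffOn_const (contDiffOn_DD hs hf))

theorem DD_congr (hs : IsOpen s) (h : Set.EqOn f g s) (hz : z ∈ s) :
    DD v f z = DD v g z := by
  have : f =ᶠ[nhds z] g := h.eventuallyEq_of_mem (hs.mem_nhds hz)
  simp only [DD, this.fderiv_eq]

theorem W_congr (hs : IsOpen s) (h : Set.EqOn f g s) (hz : z ∈ s) :
    W ε k f z = W ε k g z := by
  simp only [W, DD_congr hs h hz]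

theorem DD_zero (hs : IsOpen s) (h : ∀ x ∈ s, f x = 0) (hz : z ∈ s) :
    DD v f z = 0 := by
  have h2 : DD v f z = DD v (fun _ => (0:ℂ)) z := DD_congr hs (fun x hx => h x hx) hz
  rw [h2]
  simp [DD]

theorem W_zero (hs : IsOpen s) (h : ∀ x ∈ s, f x = 0) (hz : z ∈ s) :
    W ε k f z = 0 := by
  simp only [W, DD_zero hs h hz, mul_zero, add_zero, zero_add]

theorem DD_add (hf : DifferentiableAt ℝ f z) (hg : DifferentiableAt ℝ g z) :
    DD v (fun y => f y + g y) z = DD v f z + DD v g z := by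
  simp only [DD, fderiv_fun_add hf hg]; rfl

theorem DD_sub (hf : DifferentiableAt ℝ f z) (hg : DifferentiableAt ℝ g z) :
    DD v (fun y => f y - g y) z = DD v f z - DD v g z := by
  simp only [DD, fderiv_fun_sub hf hg]; rfl

theorem DD_const_mul (hf : DifferentiableAt ℝ f z) (c : ℂ) :
    DD v (fun y => c * f y) z = c * DD v f z := by
  simp only [DD, fderiv_const_mul hf c]; rfl

theorem DD_mul (hf : DifferentiableAt ℝ f z) (hg : DifferentiableAt ℝ g z) :
    DD v (fun y => f y * g y) z = DD v f z * g z + f z * DD v g z := by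
  simp only [DD, fderiv_fun_mul hf hg]
  simp [smul_eq_mul]; ring

theorem DD_conj (hf : DifferentiableAt ℝ f z) :
    DD v (fun y => conj (f y)) z = conj (DD v f z) := by
  have h := (Complex.conjCLE.toContinuousLinearMap.hasFDerivAt (x := f z)).comp z hf.hasFDerivAt
  have : (fun y => conj (f y)) = (⇑Complex.conjCLE.toContinuousLinearMap) ∘ f := rfl
  simp only [DD, this, h.fderiv]
  rfl

theorem W_add (hf : DifferentiableAt ℝ f z) (hg : DifferentiableAt ℝ g z) :
    W ε k (fun y => f y + g y) z = W ε k f z + W ε k g z := by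
  simp only [W, DD_add hf hg]; ring

theorem W_sub (hf : DifferentiableAt ℝ f z) (hg : DifferentiableAt ℝ g z) :
    W ε k (fun y => f y - g y) z = W ε k f z - W ε k g z := by
  simp only [W, DD_sub hf hg]; ring

theorem W_const_mul (hf : DifferentiableAt ℝ f z) (c : ℂ) :
    W ε k (fun y => c * f y) z = c * W ε k f z := by
  simp only [W, DD_const_mul hf c]; ring

theorem W_mul (hf : DifferentiableAt ℝ f z) (hg : DifferentiableAt ℝ g z) :
    W ε k (fun y => f y * g y) z = W ε k f z * g z + f z * W ε k g z := by
  simp only [W, DD_mul hf hg]; ring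

theorem W_conj (hf : DifferentiableAt ℝ f z) :
    W ε k (fun y => conj (f y)) z = conj (W (conj ε) k f z) := by
  simp only [W, DD_conj hf, map_mul, map_add, map_div₀, map_one, map_ofNat, Complex.conj_conj]

theorem DD_comm (hs : IsOpen s) (hf : ContDiffOn ℝ (⊤:ℕ∞) f s) (hz : z ∈ s) :
    DD v (DD w f) z = DD w (DD v f) z := by
  have hct : ContDiffAt ℝ ((⊤:ℕ∞):WithTop ℕ∞) f z := hf.contDiffAt (hs.mem_nhds hz)
  have hsym := hct.isSymmSndFDerivAt (by rw [minSmoothness_of_isRCLikeNormedField]; exact WithTop.coe_le_coe.2 (le_top : (2:ℕ∞) ≤ ⊤))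
  have hdf : DifferentiableAt ℝ (fderiv ℝ f) z :=
    (hct.fderiv_right (m := (⊤:ℕ∞)) (by norm_cast)).differentiableAt (by norm_cast)
  have key : ∀ a b : Fin n → ℂ, DD a (DD b f) z = fderiv ℝ (fderiv ℝ f) z a b := by
    intro a b
    have hcomp : DD b f = (ContinuousLinearMap.apply ℝ ℂ b) ∘ (fderiv ℝ f) := rfl
    have := ((ContinuousLinearMap.apply ℝ ℂ b).hasFDerivAt (x := fderiv ℝ f z)).comp z
      hdf.hasFDerivAt
    simp only [DD, hcomp, this.fderiv]
    rfl
  rw [key, key, hsym]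

theorem W_W_comm (hs : IsOpen s) (hf : ContDiffOn ℝ (⊤:ℕ∞) f s) (hz : z ∈ s)
    {ε' : ℂ} {l : Fin n} :
    W ε k (W ε' l f) z = W ε' l (W ε k f) z := by
  have d1 : DifferentiableAt ℝ (DD (EV l) f) z := diffAt hs (contDiffOn_DD hs hf) hz
  have d2 : DifferentiableAt ℝ (DD (IV l) f) z := diffAt hs (contDiffOn_DD hs hf) hz
  have d3 : DifferentiableAt ℝ (DD (EV k) f) z := diffAt hs (contDiffOn_DD hs hf) hz
  have d4 : DifferentiableAt ℝ (DD (IV k) f) z := diffAt hs (contDiffOn_DD hs hf) hz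
  have expand : ∀ u : Fin n → ℂ, DD u (W ε' l f) z
      = (1/2:ℂ) * (DD u (DD (EV l) f) z + ε' * DD u (DD (IV l) f) z) := by
    intro u
    have h0 : W ε' l f = fun y => (1/2:ℂ) * (DD (EV l) f y + ε' * DD (IV l) f y) := rfl
    rw [h0, DD_const_mul (by exact d1.add (d2.const_mul ε')),
      DD_add d1 (d2.const_mul ε'), DD_const_mul d2]
  have expand2 : ∀ u : Fin n → ℂ, DD u (W ε k f) z
      = (1/2:ℂ) * (DD u (DD (EV k) f) z + ε * DD u (DD (IV k) f) z) := by
    intro u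
    have h0 : W ε k f = fun y => (1/2:ℂ) * (DD (EV k) f y + ε * DD (IV k) f y) := rfl
    rw [h0, DD_const_mul (by exact d3.add (d4.const_mul ε)),
      DD_add d3 (d4.const_mul ε), DD_const_mul d4]
  show (1/2:ℂ) * (DD (EV k) (W ε' l f) z + ε * DD (IV k) (W ε' l f) z)
      = (1/2:ℂ) * (DD (EV l) (W ε k f) z + ε' * DD (IV l) (W ε k f) z)
  rw [expand, expand, expand2, expand2,
    DD_comm hs hf hz (v := EV k) (w := EV l),
    DD_comm hs hf hz (v := EV k) (w := IV l),
    DD_comm hs hf hz (v := IV k) (w := EV l),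
    DD_comm hs hf hz (v := IV k) (w := IV l)]
  ring

theorem WB_holo (hs : IsOpen s) (h : DifferentiableOn ℂ f s) (hz : z ∈ s) :
    W Complex.I k f z = 0 := by
  have hd : DifferentiableAt ℂ f z := (h z hz).differentiableAt (hs.mem_nhds hz)
  have hr : fderiv ℝ f z = (fderiv ℂ f z).restrictScalars ℝ :=
    (hd.hasFDerivAt.restrictScalars ℝ).fderiv
  have hIV : (IV k : Fin n → ℂ) = Complex.I • EV k := by
    simp only [IV, EV, ← Pi.single_smul, smul_eq_mul, mul_one]
  have hb : DD (IV k) f z = Complex.I * DD (EV k) f z := by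
    simp only [DD, hr, hIV]
    rw [ContinuousLinearMap.coe_restrictScalars', ContinuousLinearMap.map_smul]
    simp [smul_eq_mul]
  simp only [W, hb]
  linear_combination (DD (EV k) f z) * (1/2:ℂ) * Complex.I_sq

theorem DD_real {ρ : (Fin n → ℂ) → ℝ} (h : DifferentiableAt ℝ ρ z) :
    DD v (fun y => ((ρ y : ℝ) : ℂ)) z = ((fderiv ℝ ρ z v : ℝ) : ℂ) := by
  have hc := (Complex.ofRealCLM.hasFDerivAt (x := ρ z)).comp z h.hasFDerivAt
  have he : (fun y => ((ρ y : ℝ) : ℂ)) = (⇑Complex.ofRealCLM) ∘ ρ := rfl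
  simp only [DD, he, hc.fderiv]
  rfl

theorem W_real_conj {ρ : (Fin n → ℂ) → ℝ} (h : DifferentiableAt ℝ ρ z) :
    conj (W ε k (fun y => ((ρ y : ℝ) : ℂ)) z) = W (conj ε) k (fun y => ((ρ y : ℝ) : ℂ)) z := by
  simp only [W, DD_real h, map_mul, map_add, map_div₀, map_one, map_ofNat, Complex.conj_ofReal]

theorem diff_coord : DifferentiableAt ℝ (fun y : Fin n → ℂ => y k) z :=
  (ContinuousLinearMap.proj (R := ℝ) (φ := fun _ : Fin n => ℂ) k).differentiable.differentiableAt

theorem contDiff_coord : ContDiff ℝ (⊤:ℕ∞) (fun y : Fin n → ℂ => y k) :=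
  (ContinuousLinearMap.proj (R := ℝ) (φ := fun _ : Fin n => ℂ) k).contDiff

theorem diff_conj_coord : DifferentiableAt ℝ (fun y : Fin n → ℂ => conj (y k)) z := by
  exact (Complex.conjCLE.differentiable.differentiableAt).comp z diff_coord

theorem contDiff_conj_coord : ContDiff ℝ (⊤:ℕ∞) (fun y : Fin n → ℂ => conj (y k)) := by
  have : (fun y : Fin n → ℂ => conj (y k))
      = (⇑Complex.conjCLE.toContinuousLinearMap) ∘ (fun y : Fin n → ℂ => y k) := rfl
  rw [this]
  exact Complex.conjCLE.toContinuousLinearMap.contDiff.comp contDiff_coord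

theorem DD_coord {j : Fin n} : DD v (fun y => y j) z = v j := by
  have : (fun y : Fin n → ℂ => y j) = ⇑(ContinuousLinearMap.proj (R := ℝ)
    (φ := fun _ : Fin n => ℂ) j) := rfl
  simp only [DD, this, ContinuousLinearMap.fderiv]
  rfl

theorem WD_coord {j k : Fin n} :
    W (-Complex.I) j (fun y => y k) z = if k = j then 1 else 0 := by
  simp only [W, DD_coord, EV, IV, Pi.single_apply]
  split
  · linear_combination (-(1:ℂ)/2) * Complex.I_sq
  · norm_num

theorem WB_coord {j k : Fin n} : W Complex.I j (fun y => y k) z = 0 := by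
  simp only [W, DD_coord, EV, IV, Pi.single_apply]
  split
  · linear_combination ((1:ℂ)/2) * Complex.I_sq
  · norm_num

theorem WB_conj_coord {j k : Fin n} :
    W Complex.I j (fun y => conj (y k)) z = if k = j then 1 else 0 := by
  rw [W_conj diff_coord]
  simp only [Complex.conj_I, WD_coord]
  split <;> simp

theorem WD_conj_coord {j k : Fin n} :
    W (-Complex.I) j (fun y => conj (y k)) z = 0 := by
  rw [W_conj diff_coord]
  simp only [map_neg, Complex.conj_I, neg_neg, WB_coord, map_zero]

/-- The complexified `1 - |z|²`. -/
def UC : (Fin n → ℂ) → ℂ := fun z => 1 - ∑ i, z i * conj (z i)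

theorem contDiff_UC : ContDiff ℝ (⊤:ℕ∞) (UC (n := n)) := by
  apply ContDiff.sub contDiff_const
  apply ContDiff.sum
  intro i _
  exact (contDiff_coord (k := i)).mul contDiff_conj_coord

theorem diff_UC : DifferentiableAt ℝ (UC (n := n)) z :=
  contDiff_UC.differentiable (by norm_cast) z

theorem DD_UC : DD v (UC (n := n)) z = -∑ i, (v i * conj (z i) + z i * conj (v i)) := by
  have h1 : DD v (fun _ : Fin n → ℂ => (1:ℂ)) z = 0 := by simp [DD]
  have hsum : ∀ i : Fin n, DifferentiableAt ℝ (fun y : Fin n → ℂ => y i * conj (y i)) z :=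
    fun i => (diff_coord (k := i)).mul diff_conj_coord
  have hd2 : DifferentiableAt ℝ (fun y : Fin n → ℂ => ∑ i, y i * conj (y i)) z :=
    DifferentiableAt.fun_sum (fun i _ => hsum i)
  have hDD : DD v (fun y : Fin n → ℂ => ∑ i, y i * conj (y i)) z
      = ∑ i, DD v (fun y : Fin n → ℂ => y i * conj (y i)) z := by
    simp only [DD, fderiv_fun_sum (fun i (_ : i ∈ Finset.univ) => hsum i)]
    rw [ContinuousLinearMap.sum_apply]
  have h2 : DD v (fun y : Fin n → ℂ => ∑ i, y i * conj (y i)) z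
      = ∑ i, (v i * conj (z i) + z i * conj (v i)) := by
    rw [hDD]
    apply Finset.sum_congr rfl
    intro i _
    rw [DD_mul (diff_coord (k := i)) (diff_conj_coord (k := i)), DD_coord,
      DD_conj (diff_coord (k := i)), DD_coord]
  have h3 := DD_sub (v := v) (z := z) (f := fun _ : Fin n → ℂ => (1:ℂ))
    (g := fun y : Fin n → ℂ => ∑ i, y i * conj (y i)) (differentiableAt_const 1) hd2
  have he : DD v (UC (n := n)) z = DD v (fun y : Fin n → ℂ =>
      (fun _ : Fin n → ℂ => (1:ℂ)) y - (fun y : Fin n → ℂ => ∑ i, y i * conj (y i)) y) z := rfl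
  rw [he, h3, h1, h2]
  ring

theorem WB_UC : W Complex.I j (UC (n := n)) z = -(z j) := by
  simp only [W, DD_UC, EV, IV, Pi.single_apply]
  have e1 : ∀ i : Fin n, ((if i = j then (1:ℂ) else 0) * conj (z i)
      + z i * conj (if i = j then (1:ℂ) else 0)) = if i = j then conj (z i) + z i else 0 := by
    intro i; split <;> simp
  have e2 : ∀ i : Fin n, ((if i = j then Complex.I else 0) * conj (z i)
      + z i * conj (if i = j then Complex.I else 0))
      = if i = j then Complex.I * conj (z i) - Complex.I * z i else 0 := by
    intro i; split <;> simp [Complex.conj_I] <;> ring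
  rw [show (∑ i, ((if i = j then (1:ℂ) else 0) * conj (z i)
      + z i * conj (if i = j then (1:ℂ) else 0))) = conj (z j) + z j by
    rw [Finset.sum_congr rfl (fun i _ => e1 i)]; simp]
  rw [show (∑ i, ((if i = j then Complex.I else 0) * conj (z i)
      + z i * conj (if i = j then Complex.I else 0)))
      = Complex.I * conj (z j) - Complex.I * z j by
    rw [Finset.sum_congr rfl (fun i _ => e2 i)]; simp]
  linear_combination ((z j - conj (z j))/2) * Complex.I_sq

theorem WD_UC : W (-Complex.I) j (UC (n := n)) z = -conj (z j) := by
  have hconjUC : (fun y : Fin n → ℂ => conj (UC (n := n) y)) = UC (n := n) := by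
    funext y
    simp only [UC, map_sub, map_one, map_sum, map_mul, Complex.conj_conj]
    congr 1
    apply Finset.sum_congr rfl
    intro i _
    ring
  have h := W_conj (ε := -Complex.I) (k := j) (z := z) (diff_UC (n := n))
  rw [hconjUC] at h
  rw [h]
  simp only [map_neg, Complex.conj_I, neg_neg, WB_UC]

theorem fderiv_zero_of_W (_hd : DifferentiableAt ℝ f z)
    (h1 : ∀ k, W (-Complex.I) k f z = 0) (h2 : ∀ k, W Complex.I k f z = 0) :
    fderiv ℝ f z = 0 := by
  have hE : ∀ k, fderiv ℝ f z (EV k) = 0 := by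
    intro k
    have ha : DD (EV k) f z = W (-Complex.I) k f z + W Complex.I k f z := by
      simp only [W]; ring
    have hb : DD (EV k) f z = 0 := by rw [ha, h1 k, h2 k, add_zero]
    simpa [DD] using hb
  have hI : ∀ k, fderiv ℝ f z (IV k) = 0 := by
    intro k
    have ha : W Complex.I k f z - W (-Complex.I) k f z = Complex.I * DD (IV k) f z := by
      simp only [W]; ring
    have h0 : Complex.I * DD (IV k) f z = 0 := by rw [← ha, h1 k, h2 k, sub_zero]
    rcases mul_eq_zero.1 h0 with h | h
    · exact absurd h Complex.I_ne_zero
    · simpa [DD] using h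
  ext v
  have hv : v = ∑ k, Pi.single k (v k) := (Finset.univ_sum_single v).symm
  rw [ContinuousLinearMap.zero_apply, hv, map_sum]
  apply Finset.sum_eq_zero
  intro k _
  have hvk : (v k) = (v k).re • (1:ℂ) + (v k).im • Complex.I := by
    rw [Complex.real_smul, Complex.real_smul, mul_one]
    exact (Complex.re_add_im (v k)).symm
  have hsingle : Pi.single k (v k) = (v k).re • EV k + (v k).im • IV k := by
    have h0 := congrArg (fun t : ℂ => (Pi.single k t : Fin n → ℂ)) hvk
    rw [h0, Pi.single_add, Pi.single_smul, Pi.single_smul]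
    rfl
  rw [hsingle, map_add, ContinuousLinearMap.map_smul, ContinuousLinearMap.map_smul, hE k, hI k]
  simp

theorem diffAtF {F : Type*} [NormedAddCommGroup F] [NormedSpace ℝ F]
    {f : (Fin n → ℂ) → F} (hs : IsOpen s) (hf : ContDiffOn ℝ (⊤:ℕ∞) f s) (hz : z ∈ s) :
    DifferentiableAt ℝ f z :=
  (hf.contDiffAt (hs.mem_nhds hz)).differentiableAt (by norm_cast)

theorem diff_conj (hf : DifferentiableAt ℝ f z) :
    DifferentiableAt ℝ (fun y => conj (f y)) z :=
  (Complex.conjCLE.differentiable.differentiableAt).comp z hf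

theorem contDiffOn_conj (hf : ContDiffOn ℝ (⊤:ℕ∞) f s) :
    ContDiffOn ℝ (⊤:ℕ∞) (fun y => conj (f y)) s := by
  have : (fun y => conj (f y)) = (⇑Complex.conjCLE.toContinuousLinearMap) ∘ f := rfl
  rw [this]
  exact Complex.conjCLE.toContinuousLinearMap.contDiff.comp_contDiffOn hf

theorem W_neg (hf : DifferentiableAt ℝ f z) :
    W ε k (fun y => -(f y)) z = -(W ε k f z) := by
  have h : (fun y => -(f y)) = fun y => (-1 : ℂ) * f y := by funext y; ring
  rw [h, W_const_mul hf]
  ring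

theorem UC_real : conj (UC (n := n) z) = UC z := by
  have hconjUC : (fun y : Fin n → ℂ => conj (UC (n := n) y)) = UC (n := n) := by
    funext y
    simp only [UC, map_sub, map_one, map_sum, map_mul, Complex.conj_conj]
    congr 1
    apply Finset.sum_congr rfl
    intro i _
    ring
  exact congrFun hconjUC z

end AuxW

namespace BallFacts
variable {n : ℕ}

theorem isOpen_unitBall : IsOpen (unitBall n) := by
  have hc : Continuous (normSq' (n := n)) :=
    continuous_finset_sum _ fun i _ => Complex.continuous_normSq.comp (continuous_apply i)
  exact isOpen_Iio.preimage hc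

theorem convex_unitBall : Convex ℝ (unitBall n) := by
  set L := ((WithLp.linearEquiv 2 ℝ (Fin n → ℂ)).symm.toLinearMap)
  have hset : unitBall n = ⇑L ⁻¹' (Metric.ball (0 : EuclideanSpace ℂ (Fin n)) 1) := by
    ext z
    simp only [Set.mem_preimage, mem_ball_zero_iff]
    have hnorm : ‖L z‖ = Real.sqrt (∑ i, ‖(L z) i‖ ^ 2) := EuclideanSpace.norm_eq (L z)
    have hcoord : ∀ i, (L z) i = z i := fun i => rfl
    rw [hnorm]
    simp only [hcoord]
    rw [Real.sqrt_lt' one_pos, one_pow]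
    have : ∑ i, ‖z i‖ ^ 2 = normSq' z := by
      apply Finset.sum_congr rfl
      intro i _
      rw [Complex.sq_norm]
    rw [this]
    exact Iff.rfl
  rw [hset]
  exact (convex_ball (0 : EuclideanSpace ℂ (Fin n)) 1).linear_preimage L

theorem zero_mem : (0 : Fin n → ℂ) ∈ unitBall n := by
  simp [unitBall, normSq']

theorem pos_of_mem {z : Fin n → ℂ} (hz : z ∈ unitBall n) : 0 < 1 - normSq' z :=
  sub_pos.2 hz

end BallFacts

namespace MainAux
open AuxW BallFacts
variable {n : ℕ}

/-- `∂ψ/∂z̄ₖ` -/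
def Qf (ψ : (Fin n → ℂ) → ℝ) (k : Fin n) : (Fin n → ℂ) → ℂ :=
  AuxW.W Complex.I k (fun w => ((ψ w : ℝ) : ℂ))

/-- `∂ψ/∂zₖ` -/
def Pf (ψ : (Fin n → ℂ) → ℝ) (k : Fin n) : (Fin n → ℂ) → ℂ :=
  AuxW.W (-Complex.I) k (fun w => ((ψ w : ℝ) : ℂ))

/-- `Fₖ = (1-|z|²) ∂ψ/∂z̄ₖ` -/
def Ff (ψ : (Fin n → ℂ) → ℝ) (k : Fin n) : (Fin n → ℂ) → ℂ :=
  fun z => AuxW.UC z * Qf ψ k z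

def DFf (ψ : (Fin n → ℂ) → ℝ) (j k : Fin n) : (Fin n → ℂ) → ℂ :=
  AuxW.W (-Complex.I) j (Ff ψ k)

def KKf (ψ : (Fin n → ℂ) → ℝ) (a b c : Fin n) : (Fin n → ℂ) → ℂ :=
  AuxW.W (-Complex.I) a (DFf ψ b c)

def TTf (ψ : (Fin n → ℂ) → ℝ) (a b c d : Fin n) : (Fin n → ℂ) → ℂ :=
  AuxW.W (-Complex.I) a (KKf ψ b c d)

end MainAux

/-- if `ψ : 𝔹ⁿ → ℝ` is smooth and each component
`(1 − |z|²) ∂ψ/∂z̄ₖ` of the gradient field of `ψ` w.r.t. the conformally flat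
metric `δⱼₖ/(1 − |z|²)` is holomorphic on `𝔹ⁿ`, then
`ψ(z) = A + B log(1 − |z|²)`. -/
theorem stmt1 (n : ℕ) (hn : 1 ≤ n) (ψ : (Fin n → ℂ) → ℝ)
    (hψ : ContDiffOn ℝ (⊤ : ℕ∞) ψ (unitBall n))
    (hhol : ∀ k : Fin n,
      DifferentiableOn ℂ
        (fun z => ((1 - normSq' z : ℝ) : ℂ) * wirtZBarR ψ k z) (unitBall n)) :
    ∃ A B : ℝ, ∀ z ∈ unitBall n, ψ z = A + B * Real.log (1 - normSq' z) := by
  classical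
  open AuxW BallFacts MainAux in
  have hB : IsOpen (unitBall n) := isOpen_unitBall
  have hBconv : Convex ℝ (unitBall n) := convex_unitBall
  have h0B : (0 : Fin n → ℂ) ∈ unitBall n := zero_mem
  -- basic facts about UC
  have hUCeq : ∀ z : Fin n → ℂ, ((1 - normSq' z : ℝ) : ℂ) = AuxW.UC z := by
    intro z
    simp only [AuxW.UC, normSq']
    push_cast
    congr 1
    exact Finset.sum_congr rfl fun i _ => (Complex.mul_conj (z i)).symm
  have hUCne : ∀ z ∈ unitBall n, AuxW.UC z ≠ 0 := by
    intro z hz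
    rw [← hUCeq]
    exact_mod_cast ne_of_gt (pos_of_mem hz)
  have hUC0 : AuxW.UC (0 : Fin n → ℂ) = 1 := by simp [AuxW.UC]
  -- smoothness
  have hψt : ContDiffOn ℝ (⊤:ℕ∞) (fun w => ((ψ w : ℝ) : ℂ)) (unitBall n) :=
    Complex.ofRealCLM.contDiff.comp_contDiffOn hψ
  have hQC : ∀ k, ContDiffOn ℝ (⊤:ℕ∞) (Qf ψ k) (unitBall n) :=
    fun _ => contDiffOn_W hB hψt
  have hPC : ∀ k, ContDiffOn ℝ (⊤:ℕ∞) (Pf ψ k) (unitBall n) :=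
    fun _ => contDiffOn_W hB hψt
  have hUCC : ContDiffOn ℝ (⊤:ℕ∞) (AuxW.UC (n := n)) (unitBall n) :=
    contDiff_UC.contDiffOn
  have hFC : ∀ k, ContDiffOn ℝ (⊤:ℕ∞) (Ff ψ k) (unitBall n) :=
    fun k => hUCC.mul (hQC k)
  have hDFC : ∀ j k, ContDiffOn ℝ (⊤:ℕ∞) (DFf ψ j k) (unitBall n) :=
    fun _ k => contDiffOn_W hB (hFC k)
  have hKKC : ∀ a b c, ContDiffOn ℝ (⊤:ℕ∞) (KKf ψ a b c) (unitBall n) :=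
    fun _ b c => contDiffOn_W hB (hDFC b c)
  -- holomorphy of F and vanishing of ∂̄ on the derivative tower
  have hFhol : ∀ k, DifferentiableOn ℂ (Ff ψ k) (unitBall n) := by
    intro k
    have he : (fun z => ((1 - normSq' z : ℝ) : ℂ) * wirtZBarR ψ k z) = Ff ψ k := by
      funext z; rw [hUCeq]; rfl
    have h := hhol k
    rwa [he] at h
  have hFb : ∀ k m, ∀ z ∈ unitBall n, AuxW.W Complex.I m (Ff ψ k) z = 0 :=
    fun k _ _ hz => WB_holo hB (hFhol k) hz
  have hDFb : ∀ p j k, ∀ z ∈ unitBall n, AuxW.W Complex.I p (DFf ψ j k) z = 0 := by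
    intro p j k z hz
    have h1 : AuxW.W Complex.I p (AuxW.W (-Complex.I) j (Ff ψ k)) z
        = AuxW.W (-Complex.I) j (AuxW.W Complex.I p (Ff ψ k)) z := W_W_comm hB (hFC k) hz
    have h2 : AuxW.W (-Complex.I) j (AuxW.W Complex.I p (Ff ψ k)) z = 0 :=
      W_zero hB (hFb k p) hz
    exact h1.trans h2
  have hKKb : ∀ p a b c, ∀ z ∈ unitBall n, AuxW.W Complex.I p (KKf ψ a b c) z = 0 := by
    intro p a b c z hz
    have h1 : AuxW.W Complex.I p (AuxW.W (-Complex.I) a (DFf ψ b c)) z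
        = AuxW.W (-Complex.I) a (AuxW.W Complex.I p (DFf ψ b c)) z := W_W_comm hB (hDFC b c) hz
    have h2 : AuxW.W (-Complex.I) a (AuxW.W Complex.I p (DFf ψ b c)) z = 0 :=
      W_zero hB (hDFb p b c) hz
    exact h1.trans h2
  have hTTb : ∀ p a b c d, ∀ z ∈ unitBall n, AuxW.W Complex.I p (TTf ψ a b c d) z = 0 := by
    intro p a b c d z hz
    have h1 : AuxW.W Complex.I p (AuxW.W (-Complex.I) a (KKf ψ b c d)) z
        = AuxW.W (-Complex.I) a (AuxW.W Complex.I p (KKf ψ b c d)) z := W_W_comm hB (hKKC b c d) hz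
    have h2 : AuxW.W (-Complex.I) a (AuxW.W Complex.I p (KKf ψ b c d)) z = 0 :=
      W_zero hB (hKKb p b c d) hz
    exact h1.trans h2
  -- reality
  have hPQ : ∀ k, ∀ z ∈ unitBall n, (starRingEnd ℂ) (Qf ψ k z) = Pf ψ k z := by
    intro k z hz
    have h := W_real_conj (ε := Complex.I) (k := k) (ρ := ψ) (z := z) (diffAtF hB hψ hz)
    rwa [Complex.conj_I] at h
  have hsymQP : ∀ j k, ∀ z ∈ unitBall n,
      AuxW.W (-Complex.I) j (Qf ψ k) z = AuxW.W Complex.I k (Pf ψ j) z :=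
    fun _ _ _ hz => W_W_comm hB hψt hz
    -- (I1): the fundamental first-order identity
  have hconjF : ∀ j, ∀ z ∈ unitBall n,
      (starRingEnd ℂ) (Ff ψ j z) = AuxW.UC z * Pf ψ j z := by
    intro j z hz
    show (starRingEnd ℂ) (AuxW.UC z * Qf ψ j z) = _
    rw [map_mul, UC_real, hPQ j z hz]
  have hI1 : ∀ j k, ∀ z ∈ unitBall n,
      AuxW.UC z * (DFf ψ j k z - (starRingEnd ℂ) (DFf ψ k j z))
        + (starRingEnd ℂ) (z j) * Ff ψ k z - z k * (starRingEnd ℂ) (Ff ψ j z) = 0 := by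
    intro j k z hz
    have dUC := diff_UC (n := n) (z := z)
    have dQ : DifferentiableAt ℝ (Qf ψ k) z := diffAt hB (hQC k) hz
    have dP : DifferentiableAt ℝ (Pf ψ j) z := diffAt hB (hPC j) hz
    have dF : DifferentiableAt ℝ (Ff ψ j) z := diffAt hB (hFC j) hz
    have e1 : DFf ψ j k z = -(starRingEnd ℂ) (z j) * Qf ψ k z
        + AuxW.UC z * AuxW.W (-Complex.I) j (Qf ψ k) z := by
      have h := W_mul (ε := -Complex.I) (k := j) (z := z) (f := AuxW.UC) (g := Qf ψ k) dUC dQ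
      rw [WD_UC] at h
      calc DFf ψ j k z = AuxW.W (-Complex.I) j (fun y => AuxW.UC y * Qf ψ k y) z := rfl
        _ = _ := by rw [h]
    have e2' : Set.EqOn (fun y => (starRingEnd ℂ) (Ff ψ j y))
        (fun y => AuxW.UC y * Pf ψ j y) (unitBall n) := fun y hy => hconjF j y hy
    have e3 : (starRingEnd ℂ) (DFf ψ k j z) = -(z k) * Pf ψ j z
        + AuxW.UC z * AuxW.W Complex.I k (Pf ψ j) z := by
      have h1 : AuxW.W Complex.I k (fun y => (starRingEnd ℂ) (Ff ψ j y)) z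
          = (starRingEnd ℂ) (AuxW.W ((starRingEnd ℂ) Complex.I) k (Ff ψ j) z) := W_conj dF
      rw [Complex.conj_I] at h1
      have h2 : AuxW.W Complex.I k (fun y => (starRingEnd ℂ) (Ff ψ j y)) z
          = AuxW.W Complex.I k (fun y => AuxW.UC y * Pf ψ j y) z := W_congr hB e2' hz
      have h3 := W_mul (ε := Complex.I) (k := k) (z := z) (f := AuxW.UC) (g := Pf ψ j) dUC dP
      rw [WB_UC] at h3
      have h4 : (starRingEnd ℂ) (DFf ψ k j z)
          = AuxW.W Complex.I k (fun y => (starRingEnd ℂ) (Ff ψ j y)) z := h1.symm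
      rw [h4, h2, h3]
    rw [e1, e3, hconjF j z hz, show Ff ψ k z = AuxW.UC z * Qf ψ k z from rfl,
      hsymQP j k z hz]
    ring
  -- (I2)
  have hI2 : ∀ m j k, ∀ z ∈ unitBall n,
      -(z m) * (DFf ψ j k z - (starRingEnd ℂ) (DFf ψ k j z))
        - AuxW.UC z * (starRingEnd ℂ) (KKf ψ m k j z)
        + (if j = m then (1:ℂ) else 0) * Ff ψ k z
        - z k * (starRingEnd ℂ) (DFf ψ m j z) = 0 := by
    intro m j k z hz
    have dUC := diff_UC (n := n) (z := z)
    have dF : ∀ k', DifferentiableAt ℝ (Ff ψ k') z := fun k' => diffAt hB (hFC k') hz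
    have dDF : ∀ a b, DifferentiableAt ℝ (DFf ψ a b) z := fun a b => diffAt hB (hDFC a b) hz
    have dcDF : ∀ a b, DifferentiableAt ℝ (fun y => (starRingEnd ℂ) (DFf ψ a b y)) z :=
      fun a b => diff_conj (dDF a b)
    have dX : DifferentiableAt ℝ (fun y => DFf ψ j k y - (starRingEnd ℂ) (DFf ψ k j y)) z :=
      (dDF j k).sub (dcDF k j)
    have h0 : AuxW.W Complex.I m (fun y =>
        AuxW.UC y * (DFf ψ j k y - (starRingEnd ℂ) (DFf ψ k j y))
        + (starRingEnd ℂ) (y j) * Ff ψ k y - y k * (starRingEnd ℂ) (Ff ψ j y)) z = 0 :=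
      W_zero hB (hI1 j k) hz
    have t1 : AuxW.W Complex.I m
        (fun y => AuxW.UC y * (DFf ψ j k y - (starRingEnd ℂ) (DFf ψ k j y))) z
        = -(z m) * (DFf ψ j k z - (starRingEnd ℂ) (DFf ψ k j z))
          - AuxW.UC z * (starRingEnd ℂ) (KKf ψ m k j z) := by
      rw [W_mul dUC dX, WB_UC]
      have hX : AuxW.W Complex.I m
          (fun y => DFf ψ j k y - (starRingEnd ℂ) (DFf ψ k j y)) z
          = -(starRingEnd ℂ) (KKf ψ m k j z) := by
        rw [W_sub (dDF j k) (dcDF k j), W_conj (dDF k j), Complex.conj_I, hDFb m j k z hz]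
        rw [show AuxW.W (-Complex.I) m (DFf ψ k j) z = KKf ψ m k j z from rfl]
        ring
      rw [hX]; ring
    have t2 : AuxW.W Complex.I m (fun y => (starRingEnd ℂ) (y j) * Ff ψ k y) z
        = (if j = m then (1:ℂ) else 0) * Ff ψ k z := by
      rw [W_mul diff_conj_coord (dF k), WB_conj_coord, hFb k m z hz]
      ring
    have t3 : AuxW.W Complex.I m (fun y => y k * (starRingEnd ℂ) (Ff ψ j y)) z
        = z k * (starRingEnd ℂ) (DFf ψ m j z) := by
      rw [W_mul diff_coord (diff_conj (dF j)), WB_coord, W_conj (dF j), Complex.conj_I]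
      rw [show AuxW.W (-Complex.I) m (Ff ψ j) z = DFf ψ m j z from rfl]
      ring
    have hsplit : AuxW.W Complex.I m (fun y =>
        AuxW.UC y * (DFf ψ j k y - (starRingEnd ℂ) (DFf ψ k j y))
        + (starRingEnd ℂ) (y j) * Ff ψ k y - y k * (starRingEnd ℂ) (Ff ψ j y)) z
        = AuxW.W Complex.I m
            (fun y => AuxW.UC y * (DFf ψ j k y - (starRingEnd ℂ) (DFf ψ k j y))) z
          + AuxW.W Complex.I m (fun y => (starRingEnd ℂ) (y j) * Ff ψ k y) z
          - AuxW.W Complex.I m (fun y => y k * (starRingEnd ℂ) (Ff ψ j y)) z := by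
      rw [W_sub ((dUC.fun_mul dX).fun_add (diff_conj_coord.fun_mul (dF k)))
          (diff_coord.fun_mul (diff_conj (dF j))),
        W_add (dUC.fun_mul dX) (diff_conj_coord.fun_mul (dF k))]
    rw [hsplit, t1, t2, t3] at h0
    linear_combination h0
  -- (I3)
  have hI3 : ∀ l m j k, ∀ z ∈ unitBall n,
      z m * (starRingEnd ℂ) (KKf ψ l k j z) + z l * (starRingEnd ℂ) (KKf ψ m k j z)
        - AuxW.UC z * (starRingEnd ℂ) (TTf ψ l m k j z)
        - z k * (starRingEnd ℂ) (KKf ψ l m j z) = 0 := by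
    intro l m j k z hz
    have dUC := diff_UC (n := n) (z := z)
    have dF : ∀ k', DifferentiableAt ℝ (Ff ψ k') z := fun k' => diffAt hB (hFC k') hz
    have dDF : ∀ a b, DifferentiableAt ℝ (DFf ψ a b) z := fun a b => diffAt hB (hDFC a b) hz
    have dcDF : ∀ a b, DifferentiableAt ℝ (fun y => (starRingEnd ℂ) (DFf ψ a b y)) z :=
      fun a b => diff_conj (dDF a b)
    have dKK : ∀ a b c, DifferentiableAt ℝ (KKf ψ a b c) z := fun a b c => diffAt hB (hKKC a b c) hz
    have dcKK : ∀ a b c, DifferentiableAt ℝ (fun y => (starRingEnd ℂ) (KKf ψ a b c y)) z :=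
      fun a b c => diff_conj (dKK a b c)
    have dX : DifferentiableAt ℝ (fun y => DFf ψ j k y - (starRingEnd ℂ) (DFf ψ k j y)) z :=
      (dDF j k).sub (dcDF k j)
    have dcoordm : DifferentiableAt ℝ (fun y : Fin n → ℂ => -(y m)) z := diff_coord.neg
    have h0 : AuxW.W Complex.I l (fun y =>
        -(y m) * (DFf ψ j k y - (starRingEnd ℂ) (DFf ψ k j y))
        - AuxW.UC y * (starRingEnd ℂ) (KKf ψ m k j y)
        + (if j = m then (1:ℂ) else 0) * Ff ψ k y
        - y k * (starRingEnd ℂ) (DFf ψ m j y)) z = 0 :=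
      W_zero hB (hI2 m j k) hz
    have hXval : AuxW.W Complex.I l
        (fun y => DFf ψ j k y - (starRingEnd ℂ) (DFf ψ k j y)) z
        = -(starRingEnd ℂ) (KKf ψ l k j z) := by
      rw [W_sub (dDF j k) (dcDF k j), W_conj (dDF k j), Complex.conj_I, hDFb l j k z hz]
      rw [show AuxW.W (-Complex.I) l (DFf ψ k j) z = KKf ψ l k j z from rfl]
      ring
    have t1 : AuxW.W Complex.I l
        (fun y => -(y m) * (DFf ψ j k y - (starRingEnd ℂ) (DFf ψ k j y))) z
        = z m * (starRingEnd ℂ) (KKf ψ l k j z) := by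
      rw [W_mul dcoordm dX, W_neg diff_coord, WB_coord, hXval]
      ring
    have t2 : AuxW.W Complex.I l (fun y => AuxW.UC y * (starRingEnd ℂ) (KKf ψ m k j y)) z
        = -(z l) * (starRingEnd ℂ) (KKf ψ m k j z)
          + AuxW.UC z * (starRingEnd ℂ) (TTf ψ l m k j z) := by
      rw [W_mul dUC (dcKK m k j), WB_UC, W_conj (dKK m k j), Complex.conj_I]
      rw [show AuxW.W (-Complex.I) l (KKf ψ m k j) z = TTf ψ l m k j z from rfl]
    have t3 : AuxW.W Complex.I l (fun y => (if j = m then (1:ℂ) else 0) * Ff ψ k y) z = 0 := by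
      rw [W_const_mul (dF k), hFb k l z hz, mul_zero]
    have t4 : AuxW.W Complex.I l (fun y => y k * (starRingEnd ℂ) (DFf ψ m j y)) z
        = z k * (starRingEnd ℂ) (KKf ψ l m j z) := by
      rw [W_mul diff_coord (dcDF m j), WB_coord, W_conj (dDF m j), Complex.conj_I]
      rw [show AuxW.W (-Complex.I) l (DFf ψ m j) z = KKf ψ l m j z from rfl]
      ring
    have hsplit : AuxW.W Complex.I l (fun y =>
        -(y m) * (DFf ψ j k y - (starRingEnd ℂ) (DFf ψ k j y))
        - AuxW.UC y * (starRingEnd ℂ) (KKf ψ m k j y)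
        + (if j = m then (1:ℂ) else 0) * Ff ψ k y
        - y k * (starRingEnd ℂ) (DFf ψ m j y)) z
        = AuxW.W Complex.I l
            (fun y => -(y m) * (DFf ψ j k y - (starRingEnd ℂ) (DFf ψ k j y))) z
          - AuxW.W Complex.I l (fun y => AuxW.UC y * (starRingEnd ℂ) (KKf ψ m k j y)) z
          + AuxW.W Complex.I l (fun y => (if j = m then (1:ℂ) else 0) * Ff ψ k y) z
          - AuxW.W Complex.I l (fun y => y k * (starRingEnd ℂ) (DFf ψ m j y)) z := by
      have d1 : DifferentiableAt ℝ
          (fun y => -(y m) * (DFf ψ j k y - (starRingEnd ℂ) (DFf ψ k j y))) z :=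
        dcoordm.mul dX
      have d2 : DifferentiableAt ℝ
          (fun y => AuxW.UC y * (starRingEnd ℂ) (KKf ψ m k j y)) z := dUC.mul (dcKK m k j)
      have d3 : DifferentiableAt ℝ
          (fun y => (if j = m then (1:ℂ) else 0) * Ff ψ k y) z := (dF k).const_mul _
      have d4 : DifferentiableAt ℝ
          (fun y => y k * (starRingEnd ℂ) (DFf ψ m j y)) z := diff_coord.mul (dcDF m j)
      rw [W_sub ((d1.fun_sub d2).fun_add d3) d4, W_add (d1.fun_sub d2) d3, W_sub d1 d2]
    rw [hsplit, t1, t2, t3, t4] at h0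
    linear_combination h0
  -- conjugated version (I3')
  have hI3' : ∀ l m j k, ∀ z ∈ unitBall n,
      (starRingEnd ℂ) (z m) * KKf ψ l k j z + (starRingEnd ℂ) (z l) * KKf ψ m k j z
        - AuxW.UC z * TTf ψ l m k j z
        - (starRingEnd ℂ) (z k) * KKf ψ l m j z = 0 := by
    intro l m j k z hz
    have h := congrArg (starRingEnd ℂ) (hI3 l m j k z hz)
    simpa [map_add, map_sub, map_mul, Complex.conj_conj, UC_real] using h
  -- K with repeated first indices vanishes
  have hTlll : ∀ l j, ∀ z ∈ unitBall n, TTf ψ l l l j z = 0 := by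
    intro l j z hz
    -- specialization of I3' : conj (z l) * KK l l j = UC * TT l l l j
    have hS1 : ∀ x ∈ unitBall n,
        AuxW.UC x * TTf ψ l l l j x - (starRingEnd ℂ) (x l) * KKf ψ l l j x = 0 := by
      intro x hx
      have h := hI3' l l j l x hx
      linear_combination -h
    -- differentiate: K l l j = - z l * T l l l j
    have dUC := diff_UC (n := n) (z := z)
    have dKK : DifferentiableAt ℝ (KKf ψ l l j) z := diffAt hB (hKKC l l j) hz
    have dTT : DifferentiableAt ℝ (TTf ψ l l l j) z :=
      diffAt hB (contDiffOn_W hB (hKKC l l j)) hz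
    have h0 : AuxW.W Complex.I l (fun y =>
        AuxW.UC y * TTf ψ l l l j y - (starRingEnd ℂ) (y l) * KKf ψ l l j y) z = 0 :=
      W_zero hB hS1 hz
    rw [W_sub (dUC.fun_mul dTT) (diff_conj_coord.fun_mul dKK), W_mul dUC dTT, WB_UC,
      W_mul diff_conj_coord dKK, WB_conj_coord, hTTb l l l l j z hz, hKKb l l l j z hz,
      if_pos rfl] at h0
    -- h0 : -(z l) * TT z + UC z * 0 - (1 * KK z + conj (z l) * 0) = 0
    have hK : KKf ψ l l j z = -(z l) * TTf ψ l l l j z := by linear_combination -h0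
    have hS1z := hS1 z hz
    rw [hK] at hS1z
    -- (UC z + conj (z l) * z l) * TT = 0 with positive real coefficient
    have hcoef : AuxW.UC z + (starRingEnd ℂ) (z l) * z l
        = ((1 - normSq' z + Complex.normSq (z l) : ℝ) : ℂ) := by
      have h1 : (starRingEnd ℂ) (z l) * z l = ((Complex.normSq (z l) : ℝ) : ℂ) := by
        rw [mul_comm, Complex.mul_conj]
      rw [← hUCeq, h1]
      push_cast
      try ring
    have hpos : (0:ℝ) < 1 - normSq' z + Complex.normSq (z l) := by
      have h1 := pos_of_mem hz
      have h2 := Complex.normSq_nonneg (z l)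
      linarith
    have hco : AuxW.UC z + (starRingEnd ℂ) (z l) * z l ≠ 0 := by
      rw [hcoef]
      exact_mod_cast ne_of_gt hpos
    have : (AuxW.UC z + (starRingEnd ℂ) (z l) * z l) * TTf ψ l l l j z = 0 := by
      linear_combination hS1z
    exact (mul_eq_zero.1 this).resolve_left hco
  have hKll : ∀ l j, ∀ z ∈ unitBall n, KKf ψ l l j z = 0 := by
    intro l j z hz
    have dUC := diff_UC (n := n) (z := z)
    have dKK : DifferentiableAt ℝ (KKf ψ l l j) z := diffAt hB (hKKC l l j) hz
    have dTT : DifferentiableAt ℝ (TTf ψ l l l j) z :=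
      diffAt hB (contDiffOn_W hB (hKKC l l j)) hz
    have hS1 : ∀ x ∈ unitBall n,
        AuxW.UC x * TTf ψ l l l j x - (starRingEnd ℂ) (x l) * KKf ψ l l j x = 0 := by
      intro x hx
      linear_combination -hI3' l l j l x hx
    have h0 : AuxW.W Complex.I l (fun y =>
        AuxW.UC y * TTf ψ l l l j y - (starRingEnd ℂ) (y l) * KKf ψ l l j y) z = 0 :=
      W_zero hB hS1 hz
    rw [W_sub (dUC.fun_mul dTT) (diff_conj_coord.fun_mul dKK), W_mul dUC dTT, WB_UC,
      W_mul diff_conj_coord dKK, WB_conj_coord, hTTb l l l l j z hz, hKKb l l l j z hz,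
      if_pos rfl] at h0
    have hK : KKf ψ l l j z = -(z l) * TTf ψ l l l j z := by linear_combination -h0
    rw [hK, hTlll l j z hz]
    ring
  -- symmetry of KK in its two derivative indices
  have hKsymm : ∀ m k j, Set.EqOn (KKf ψ m k j) (KKf ψ k m j) (unitBall n) :=
    fun m k j z hz => W_W_comm hB (hFC j) hz
  -- T with first=third index vanishes
  have hT131 : ∀ k m j, ∀ z ∈ unitBall n, TTf ψ k m k j z = 0 := by
    intro k m j z hz
    have h := hI3' k m j k z hz
    -- conj(z m) KK kkj + conj(z k) KK mkj - UC TT kmkj - conj(z k) KK kmj = 0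
    rw [hKll k j z hz, hKsymm m k j hz] at h
    -- now: conj(z k) KK kmj - UC TT - conj(z k) KK kmj = 0
    have : AuxW.UC z * TTf ψ k m k j z = 0 := by linear_combination -h
    exact (mul_eq_zero.1 this).resolve_left (hUCne z hz)
  -- all KK vanish
  have hKall : ∀ l k j, ∀ z ∈ unitBall n, KKf ψ l k j z = 0 := by
    intro l k j z hz
    -- T l l k j = T l k l j = 0 on the ball
    have hTllk : ∀ x ∈ unitBall n, TTf ψ l l k j x = 0 := by
      intro x hx
      have he : AuxW.W (-Complex.I) l (KKf ψ l k j) x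
          = AuxW.W (-Complex.I) l (KKf ψ k l j) x := W_congr hB (hKsymm l k j) hx
      have : TTf ψ l l k j x = TTf ψ l k l j x := he
      rw [this]
      exact hT131 l k j x hx
    -- from I3' with m := l : 2 conj(z l) KK l k j = UC TT l l k j + conj(z k) KK l l j
    have hS4 : ∀ x ∈ unitBall n, (starRingEnd ℂ) (x l) * KKf ψ l k j x = 0 := by
      intro x hx
      have h := hI3' l l j k x hx
      rw [hKll l j x hx, hTllk x hx] at h
      have h2 : (2:ℂ) * ((starRingEnd ℂ) (x l) * KKf ψ l k j x) = 0 := by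
        linear_combination h
      have := mul_eq_zero.1 h2
      rcases this with h3 | h3
      · norm_num at h3
      · exact h3
    -- differentiate with ∂̄_l
    have dKK : DifferentiableAt ℝ (KKf ψ l k j) z := diffAt hB (hKKC l k j) hz
    have h0 : AuxW.W Complex.I l (fun y => (starRingEnd ℂ) (y l) * KKf ψ l k j y) z = 0 :=
      W_zero hB hS4 hz
    rw [W_mul diff_conj_coord dKK, WB_conj_coord, hKKb l l k j z hz, if_pos rfl] at h0
    -- h0 : 1 * KK z + conj (z l) * 0 = 0
    linear_combination h0
  -- DF is constant on the ball
  have hDFconst : ∀ j k, ∀ z ∈ unitBall n, DFf ψ j k z = DFf ψ j k 0 := by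
    intro j k z hz
    apply hBconv.is_const_of_fderivWithin_eq_zero
      ((hDFC j k).differentiableOn (by norm_cast)) ?_ hz h0B
    intro x hx
    rw [fderivWithin_of_mem_nhds (hB.mem_nhds hx)]
    apply fderiv_zero_of_W (diffAt hB (hDFC j k) hx)
    · intro p
      exact hKall p j k x hx
    · intro p
      exact hDFb p j k x hx
  -- Hermitian symmetry of the constants
  have hHerm : ∀ j k, DFf ψ j k 0 = (starRingEnd ℂ) (DFf ψ k j 0) := by
    intro j k
    have h := hI1 j k 0 h0B
    rw [hUC0] at h
    simp only [Pi.zero_apply, map_zero, zero_mul, mul_zero, add_zero, sub_zero, one_mul] at h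
    linear_combination h
  -- the c-relations from differentiating (I2)
  have hI6 : ∀ q m j k, ∀ z ∈ unitBall n,
      -(if m = q then (1:ℂ) else 0) * (DFf ψ j k z - (starRingEnd ℂ) (DFf ψ k j z))
        + (if j = m then (1:ℂ) else 0) * DFf ψ q k z
        - (if k = q then (1:ℂ) else 0) * (starRingEnd ℂ) (DFf ψ m j z) = 0 := by
    intro q m j k z hz
    have dUC := diff_UC (n := n) (z := z)
    have dF : ∀ k', DifferentiableAt ℝ (Ff ψ k') z := fun k' => diffAt hB (hFC k') hz
    have dDF : ∀ a b, DifferentiableAt ℝ (DFf ψ a b) z := fun a b => diffAt hB (hDFC a b) hz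
    have dcDF : ∀ a b, DifferentiableAt ℝ (fun y => (starRingEnd ℂ) (DFf ψ a b y)) z :=
      fun a b => diff_conj (dDF a b)
    have dKK : ∀ a b c, DifferentiableAt ℝ (KKf ψ a b c) z := fun a b c => diffAt hB (hKKC a b c) hz
    have dcKK : ∀ a b c, DifferentiableAt ℝ (fun y => (starRingEnd ℂ) (KKf ψ a b c y)) z :=
      fun a b c => diff_conj (dKK a b c)
    have dX : DifferentiableAt ℝ (fun y => DFf ψ j k y - (starRingEnd ℂ) (DFf ψ k j y)) z :=
      (dDF j k).sub (dcDF k j)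
    have dcoordm : DifferentiableAt ℝ (fun y : Fin n → ℂ => -(y m)) z := diff_coord.neg
    have h0 : AuxW.W (-Complex.I) q (fun y =>
        -(y m) * (DFf ψ j k y - (starRingEnd ℂ) (DFf ψ k j y))
        - AuxW.UC y * (starRingEnd ℂ) (KKf ψ m k j y)
        + (if j = m then (1:ℂ) else 0) * Ff ψ k y
        - y k * (starRingEnd ℂ) (DFf ψ m j y)) z = 0 :=
      W_zero hB (hI2 m j k) hz
    have hcmI : (starRingEnd ℂ) (-Complex.I) = Complex.I := by
      rw [map_neg, Complex.conj_I, neg_neg]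
    have hXval : AuxW.W (-Complex.I) q
        (fun y => DFf ψ j k y - (starRingEnd ℂ) (DFf ψ k j y)) z
        = KKf ψ q j k z := by
      rw [W_sub (dDF j k) (dcDF k j), W_conj (dDF k j), hcmI, hDFb q k j z hz]
      rw [show AuxW.W (-Complex.I) q (DFf ψ j k) z = KKf ψ q j k z from rfl]
      simp
    have t1 : AuxW.W (-Complex.I) q
        (fun y => -(y m) * (DFf ψ j k y - (starRingEnd ℂ) (DFf ψ k j y))) z
        = -(if m = q then (1:ℂ) else 0) * (DFf ψ j k z - (starRingEnd ℂ) (DFf ψ k j z)) := by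
      rw [W_mul dcoordm dX, W_neg diff_coord, WD_coord, hXval, hKall q j k z hz]
      ring
    have t2 : AuxW.W (-Complex.I) q
        (fun y => AuxW.UC y * (starRingEnd ℂ) (KKf ψ m k j y)) z = 0 := by
      rw [W_mul dUC (dcKK m k j), WD_UC, W_conj (dKK m k j), hcmI,
        hKKb q m k j z hz, hKall m k j z hz]
      simp
    have t3 : AuxW.W (-Complex.I) q (fun y => (if j = m then (1:ℂ) else 0) * Ff ψ k y) z
        = (if j = m then (1:ℂ) else 0) * DFf ψ q k z := by
      rw [W_const_mul (dF k)]
      rw [show AuxW.W (-Complex.I) q (Ff ψ k) z = DFf ψ q k z from rfl]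
    have t4 : AuxW.W (-Complex.I) q (fun y => y k * (starRingEnd ℂ) (DFf ψ m j y)) z
        = (if k = q then (1:ℂ) else 0) * (starRingEnd ℂ) (DFf ψ m j z) := by
      rw [W_mul diff_coord (dcDF m j), WD_coord, W_conj (dDF m j), hcmI, hDFb q m j z hz]
      simp
    have hsplit : AuxW.W (-Complex.I) q (fun y =>
        -(y m) * (DFf ψ j k y - (starRingEnd ℂ) (DFf ψ k j y))
        - AuxW.UC y * (starRingEnd ℂ) (KKf ψ m k j y)
        + (if j = m then (1:ℂ) else 0) * Ff ψ k y
        - y k * (starRingEnd ℂ) (DFf ψ m j y)) z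
        = AuxW.W (-Complex.I) q
            (fun y => -(y m) * (DFf ψ j k y - (starRingEnd ℂ) (DFf ψ k j y))) z
          - AuxW.W (-Complex.I) q (fun y => AuxW.UC y * (starRingEnd ℂ) (KKf ψ m k j y)) z
          + AuxW.W (-Complex.I) q (fun y => (if j = m then (1:ℂ) else 0) * Ff ψ k y) z
          - AuxW.W (-Complex.I) q (fun y => y k * (starRingEnd ℂ) (DFf ψ m j y)) z := by
      have d1 : DifferentiableAt ℝ
          (fun y => -(y m) * (DFf ψ j k y - (starRingEnd ℂ) (DFf ψ k j y))) z :=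
        dcoordm.mul dX
      have d2 : DifferentiableAt ℝ
          (fun y => AuxW.UC y * (starRingEnd ℂ) (KKf ψ m k j y)) z := dUC.mul (dcKK m k j)
      have d3 : DifferentiableAt ℝ
          (fun y => (if j = m then (1:ℂ) else 0) * Ff ψ k y) z := (dF k).const_mul _
      have d4 : DifferentiableAt ℝ
          (fun y => y k * (starRingEnd ℂ) (DFf ψ m j y)) z := diff_coord.mul (dcDF m j)
      rw [W_sub ((d1.fun_sub d2).fun_add d3) d4, W_add (d1.fun_sub d2) d3, W_sub d1 d2]
    rw [hsplit, t1, t2, t3, t4] at h0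
    linear_combination h0
  -- extract the constants
  set j0 : Fin n := ⟨0, hn⟩ with hj0
  set cst : ℂ := DFf ψ j0 j0 0 with hcst
  have hcst_real : (starRingEnd ℂ) cst = cst := (hHerm j0 j0).symm
  have hcq : ∀ q k, DFf ψ q k 0 = (if k = q then (1:ℂ) else 0) * cst := by
    intro q k
    have h := hI6 q j0 j0 k 0 h0B
    rw [if_pos rfl] at h
    have hjk : DFf ψ j0 k 0 - (starRingEnd ℂ) (DFf ψ k j0 0) = 0 := by
      rw [hHerm j0 k]; ring
    rw [hjk] at h
    have : DFf ψ q k 0 = (if k = q then (1:ℂ) else 0) * (starRingEnd ℂ) (DFf ψ j0 j0 0) := by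
      linear_combination h
    rw [this, ← hcst, hcst_real]
  -- F vanishes at the origin
  have hF0 : ∀ k, Ff ψ k 0 = 0 := by
    intro k
    have h := hI2 j0 j0 k 0 h0B
    rw [hUC0, if_pos rfl] at h
    simp only [Pi.zero_apply, neg_zero, zero_mul, mul_zero, one_mul, sub_zero, zero_add,
      zero_sub, one_mul] at h
    rw [hKall j0 k j0 0 h0B] at h
    simpa using h
  -- F k z = cst * z k on the ball
  have hFlin : ∀ k, ∀ z ∈ unitBall n, Ff ψ k z = cst * z k := by
    intro k z hz
    have hGC : ContDiffOn ℝ (⊤:ℕ∞) (fun y => Ff ψ k y - cst * y k) (unitBall n) :=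
      (hFC k).sub (contDiffOn_const.mul (contDiff_coord.contDiffOn))
    have hG : (fun y => Ff ψ k y - cst * y k) z = (fun y => Ff ψ k y - cst * y k) 0 := by
      apply hBconv.is_const_of_fderivWithin_eq_zero (hGC.differentiableOn (by norm_cast))
        ?_ hz h0B
      intro x hx
      rw [fderivWithin_of_mem_nhds (hB.mem_nhds hx)]
      have dF : DifferentiableAt ℝ (Ff ψ k) x := diffAt hB (hFC k) hx
      have dc : DifferentiableAt ℝ (fun y : Fin n → ℂ => cst * y k) x :=
        diff_coord.const_mul cst
      apply fderiv_zero_of_W (dF.fun_sub dc)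
      · intro p
        rw [W_sub dF dc, W_const_mul diff_coord, WD_coord]
        rw [show AuxW.W (-Complex.I) p (Ff ψ k) x = DFf ψ p k x from rfl]
        rw [hDFconst p k x hx, hcq p k]
        ring
      · intro p
        rw [W_sub dF dc, W_const_mul diff_coord, WB_coord, hFb k p x hx]
        ring
    simp only [Pi.zero_apply, mul_zero, hF0 k, sub_zero] at hG
    linear_combination hG
  -- the constant is real
  have hcre : ((cst.re : ℝ) : ℂ) = cst := Complex.conj_eq_iff_re.1 hcst_real
  -- conclusion
  refine ⟨ψ 0, -cst.re, ?_⟩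
  intro z hz
  -- the function φ = ψ - (-cst.re) log(1-|z|²) is constant on the ball
  set φ : (Fin n → ℂ) → ℝ := fun w => ψ w - (-cst.re) * Real.log (1 - normSq' w) with hφ
  -- auxiliary : the real function u = 1 - |z|²
  have hueq : (fun w : Fin n → ℂ => 1 - normSq' w) = fun w => (AuxW.UC w).re := by
    funext w
    rw [← hUCeq w, Complex.ofReal_re]
  have hud : ∀ x, DifferentiableAt ℝ (fun w : Fin n → ℂ => 1 - normSq' w) x := by
    intro x
    rw [hueq]
    exact (Complex.reCLM.differentiable.differentiableAt).comp x
      (contDiff_UC.differentiable (by norm_cast) x)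
  -- logarithmic part
  have hlogd : ∀ x ∈ unitBall n,
      HasFDerivAt (fun w : Fin n → ℂ => Real.log (1 - normSq' w))
        ((1 - normSq' x)⁻¹ • fderiv ℝ (fun w : Fin n → ℂ => 1 - normSq' w) x) x := by
    intro x hx
    exact (Real.hasDerivAt_log (ne_of_gt (pos_of_mem hx))).comp_hasFDerivAt x
      (hud x).hasFDerivAt
  have hφdiff : DifferentiableOn ℝ φ (unitBall n) := by
    intro x hx
    apply DifferentiableAt.differentiableWithinAt
    exact ((hψ x hx).differentiableWithinAt (by norm_cast)).differentiableAt
      (hB.mem_nhds hx) |>.sub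
      ((((hlogd x hx).differentiableAt).const_mul (-cst.re)))
  -- Wirtinger derivatives of the complexified log
  have hDDlog : ∀ x ∈ unitBall n, ∀ v,
      AuxW.DD v (fun w => ((Real.log (1 - normSq' w) : ℝ) : ℂ)) x
        = (AuxW.UC x)⁻¹ * AuxW.DD v (AuxW.UC (n := n)) x := by
    intro x hx v
    have hL : HasFDerivAt (fun w => ((Real.log (1 - normSq' w) : ℝ) : ℂ))
        (Complex.ofRealCLM.comp
          ((1 - normSq' x)⁻¹ • fderiv ℝ (fun w : Fin n → ℂ => 1 - normSq' w) x)) x :=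
      (Complex.ofRealCLM.hasFDerivAt).comp x (hlogd x hx)
    have hDU : AuxW.DD v (AuxW.UC (n := n)) x
        = ((fderiv ℝ (fun w : Fin n → ℂ => 1 - normSq' w) x v : ℝ) : ℂ) := by
      have h1 : (fun w : Fin n → ℂ => ((1 - normSq' w : ℝ) : ℂ)) = AuxW.UC (n := n) := by
        funext w; exact hUCeq w
      rw [← h1]
      exact AuxW.DD_real (hud x)
    rw [show AuxW.DD v (fun w => ((Real.log (1 - normSq' w) : ℝ) : ℂ)) x
        = Complex.ofRealCLM.comp
          ((1 - normSq' x)⁻¹ • fderiv ℝ (fun w : Fin n → ℂ => 1 - normSq' w) x) v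
        from by rw [AuxW.DD, hL.fderiv]]
    rw [hDU, ← hUCeq]
    simp only [ContinuousLinearMap.coe_comp', Function.comp_apply,
      ContinuousLinearMap.coe_smul', Pi.smul_apply, smul_eq_mul, Complex.ofRealCLM_apply]
    push_cast
    ring
  have hWBlog : ∀ x ∈ unitBall n, ∀ k,
      AuxW.W Complex.I k (fun w => ((Real.log (1 - normSq' w) : ℝ) : ℂ)) x
        = (AuxW.UC x)⁻¹ * (-(x k)) := by
    intro x hx k
    have h1 : AuxW.W Complex.I k (fun w => ((Real.log (1 - normSq' w) : ℝ) : ℂ)) x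
        = (AuxW.UC x)⁻¹ * AuxW.W Complex.I k (AuxW.UC (n := n)) x := by
      show (1/2 : ℂ) * (AuxW.DD (AuxW.EV k) _ x + Complex.I * AuxW.DD (AuxW.IV k) _ x) = _
      rw [hDDlog x hx, hDDlog x hx]
      show _ = (AuxW.UC x)⁻¹ *
        ((1/2 : ℂ) * (AuxW.DD (AuxW.EV k) _ x + Complex.I * AuxW.DD (AuxW.IV k) _ x))
      ring
    rw [h1, AuxW.WB_UC]
  -- differentiability of the complexified φ and log
  have hlogtd : ∀ x ∈ unitBall n,
      DifferentiableAt ℝ (fun w => ((Real.log (1 - normSq' w) : ℝ) : ℂ)) x := by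
    intro x hx
    exact (Complex.ofRealCLM.differentiable.differentiableAt).comp x
      ((hlogd x hx).differentiableAt)
  have hφteq : (fun w => ((φ w : ℝ) : ℂ))
      = fun w => (fun w' => ((ψ w' : ℝ) : ℂ)) w
        - ((-cst.re : ℝ) : ℂ) * (fun w' => ((Real.log (1 - normSq' w') : ℝ) : ℂ)) w := by
    funext w
    simp only [hφ]
    push_cast
    ring
  -- the Wirtinger derivatives of φ vanish
  have hWBφ : ∀ x ∈ unitBall n, ∀ k, AuxW.W Complex.I k (fun w => ((φ w : ℝ) : ℂ)) x = 0 := by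
    intro x hx k
    have dψt : DifferentiableAt ℝ (fun w' => ((ψ w' : ℝ) : ℂ)) x := diffAt hB hψt hx
    have dlg := hlogtd x hx
    rw [hφteq, W_sub dψt (dlg.const_mul _), W_const_mul dlg, hWBlog x hx k]
    have hQ : AuxW.UC x * Qf ψ k x = cst * x k := hFlin k x hx
    have hUne := hUCne x hx
    have hQval : AuxW.W Complex.I k (fun w' => ((ψ w' : ℝ) : ℂ)) x
        = cst * x k * (AuxW.UC x)⁻¹ := by
      have : AuxW.W Complex.I k (fun w' => ((ψ w' : ℝ) : ℂ)) x = Qf ψ k x := rfl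
      rw [this]
      field_simp
      linear_combination hQ
    rw [hQval]
    rw [show ((-cst.re : ℝ) : ℂ) = -cst by push_cast; rw [hcre]]
    field_simp
    ring
  have hWDφ : ∀ x ∈ unitBall n, ∀ k,
      AuxW.W (-Complex.I) k (fun w => ((φ w : ℝ) : ℂ)) x = 0 := by
    intro x hx k
    have h := W_real_conj (ε := Complex.I) (k := k) (ρ := φ) (z := x)
      ((hφdiff x hx).differentiableAt (hB.mem_nhds hx))
    rw [Complex.conj_I, hWBφ x hx k, map_zero] at h
    exact h.symm
  -- φ is constant
  have hφconst : φ z = φ 0 := by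
    apply hBconv.is_const_of_fderivWithin_eq_zero (𝕜 := ℝ) hφdiff ?_ hz h0B
    intro x hx
    rw [fderivWithin_of_mem_nhds (hB.mem_nhds hx)]
    have dφ : DifferentiableAt ℝ φ x := (hφdiff x hx).differentiableAt (hB.mem_nhds hx)
    have hφt : fderiv ℝ (fun w => ((φ w : ℝ) : ℂ)) x = Complex.ofRealCLM.comp (fderiv ℝ φ x) :=
      ((Complex.ofRealCLM.hasFDerivAt).comp x dφ.hasFDerivAt).fderiv
    have hzero : fderiv ℝ (fun w => ((φ w : ℝ) : ℂ)) x = 0 :=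
      fderiv_zero_of_W ((Complex.ofRealCLM.differentiable.differentiableAt).comp x dφ)
        (hWDφ x hx) (hWBφ x hx)
    ext v
    simp only [ContinuousLinearMap.zero_apply]
    have h2 := congrFun (congrArg (fun (L : (Fin n → ℂ) →L[ℝ] ℂ) => (L : (Fin n → ℂ) → ℂ))
      (hφt.symm.trans hzero)) v
    simp only [ContinuousLinearMap.coe_comp', Function.comp_apply, Complex.ofRealCLM_apply,
      ContinuousLinearMap.coe_zero, Pi.zero_apply] at h2
    have h3 : ((fderiv ℝ φ x v : ℝ) : ℂ) = 0 := by simpa using h2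
    exact_mod_cast h3
  have h00 : normSq' (0 : Fin n → ℂ) = 0 := by simp [normSq']
  rw [hφ] at hφconst
  simp only at hφconst
  rw [h00] at hφconst
  norm_num [Real.log_one] at hφconst
  linarith [hφconst]
end
end

section
/- Let n ≥ 2 and let φ : 𝔹ⁿ → ℝ be a smooth function such that {z ∈ 𝔹ⁿ : φ(z) > 0} is nonempty. Then for each j ∈ {1,…,n} the function z ↦ (1 − |z|²)(∂φ/∂z̄_j − z_j Σ_{l=1}^n z̄_l ∂φ/∂z̄_l) is holomorphic on 𝔹ⁿ if and only if there exist a Hermitian n×n matrix (c_{jk}), complex constants α_1,…,α_n, and a real constant γ such that (1 − |z|²) φ(z) = Σ_{j,k} c_{jk} z_j z̄_k + Re(Σ_k α_k z_k) + γ on 𝔹ⁿ. (The displayed function is the j-th component of (∂̄φ)^♯ with respect to the complex hyperbolic metric h_{j k̄} = (1 − |z|²)^{-1}(δ_{jk} + z̄_j z_k/(1 − |z|²)), and its holomorphicity characterizes when the conformal metric g = φ^{-1} h on {φ > 0} has holomorphic torsion.) -/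
open Complex MeasureTheory Finset

noncomputable section

namespace Wirt



variable {n : ℕ}

/-- standard basis vector. -/
def ee (k : Fin n) : Fin n → ℂ := Pi.single k 1

lemma single_I (k : Fin n) : Pi.single k Complex.I = Complex.I • ee k := by
  funext j
  by_cases h : j = k <;> simp [ee, Pi.single_apply, h]

/-- `∂f/∂zₖ`. -/
def wirtZ {n : ℕ} (f : (Fin n → ℂ) → ℂ) (k : Fin n) (z : Fin n → ℂ) : ℂ :=
  (1 / 2 : ℂ) *
    (fderiv ℝ f z (ee k) - Complex.I * fderiv ℝ f z (Complex.I • ee k))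

lemma wirtZBar_eq (f : (Fin n → ℂ) → ℂ) (k : Fin n) (z : Fin n → ℂ) :
    wirtZBar f k z = (1 / 2 : ℂ) *
      (fderiv ℝ f z (ee k) + Complex.I * fderiv ℝ f z (Complex.I • ee k)) := by
  rw [wirtZBar, single_I]; rfl

lemma apply_ee (f : (Fin n → ℂ) → ℂ) (k : Fin n) (z : Fin n → ℂ) :
    fderiv ℝ f z (ee k) = wirtZ f k z + wirtZBar f k z := by
  rw [wirtZBar_eq, wirtZ]; ring

lemma apply_Iee (f : (Fin n → ℂ) → ℂ) (k : Fin n) (z : Fin n → ℂ) :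
    fderiv ℝ f z (Complex.I • ee k)
      = Complex.I * (wirtZ f k z - wirtZBar f k z) := by
  rw [wirtZBar_eq, wirtZ]
  have : Complex.I * Complex.I = -1 := Complex.I_mul_I
  ring_nf
  rw [Complex.I_sq]
  ring

/-- decomposition of a vector in the real basis. -/
lemma decomp (v : Fin n → ℂ) :
    v = ∑ k, ((v k).re • ee k + (v k).im • (Complex.I • ee k)) := by
  funext j
  rw [Finset.sum_apply]
  have : ∀ k, ((v k).re • ee k + (v k).im • (Complex.I • ee k)) j
      = (if j = k then v k else 0) := by
    intro k
    by_cases h : j = k <;>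
      simp [ee, Pi.single_apply, h, Complex.real_smul]
  simp only [this]
  simp

lemma clm_ext_basis (L : (Fin n → ℂ) →L[ℝ] ℂ)
    (h1 : ∀ k, L (ee k) = 0) (h2 : ∀ k, L (Complex.I • ee k) = 0) (v : Fin n → ℂ) :
    L v = 0 := by
  conv_lhs => rw [decomp v]
  rw [map_sum]
  simp [h1, h2]



variable {n : ℕ}

variable {f g : (Fin n → ℂ) → ℂ} {z : Fin n → ℂ} {j k : Fin n}

-- algebra rules
lemma wirtZBar_add (hf : DifferentiableAt ℝ f z) (hg : DifferentiableAt ℝ g z) :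
    wirtZBar (fun w => f w + g w) k z = wirtZBar f k z + wirtZBar g k z := by
  simp only [wirtZBar_eq, fderiv_fun_add hf hg, ContinuousLinearMap.add_apply]; ring

lemma wirtZ_add (hf : DifferentiableAt ℝ f z) (hg : DifferentiableAt ℝ g z) :
    wirtZ (fun w => f w + g w) k z = wirtZ f k z + wirtZ g k z := by
  simp only [wirtZ, fderiv_fun_add hf hg, ContinuousLinearMap.add_apply]; ring

lemma wirtZBar_sub (hf : DifferentiableAt ℝ f z) (hg : DifferentiableAt ℝ g z) :
    wirtZBar (fun w => f w - g w) k z = wirtZBar f k z - wirtZBar g k z := by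
  simp only [wirtZBar_eq, fderiv_fun_sub hf hg, ContinuousLinearMap.sub_apply]; ring

lemma wirtZ_sub (hf : DifferentiableAt ℝ f z) (hg : DifferentiableAt ℝ g z) :
    wirtZ (fun w => f w - g w) k z = wirtZ f k z - wirtZ g k z := by
  simp only [wirtZ, fderiv_fun_sub hf hg, ContinuousLinearMap.sub_apply]; ring

lemma wirtZBar_const (c : ℂ) : wirtZBar (fun _ => c) k z = 0 := by
  simp [wirtZBar_eq, fderiv_const]

lemma wirtZ_const (c : ℂ) : wirtZ (fun _ => c) k z = 0 := by
  simp [wirtZ, fderiv_const]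

lemma wirtZBar_const_mul (hf : DifferentiableAt ℝ f z) (c : ℂ) :
    wirtZBar (fun w => c * f w) k z = c * wirtZBar f k z := by
  simp only [wirtZBar_eq, fderiv_const_mul hf c, ContinuousLinearMap.smul_apply,
    smul_eq_mul]; ring

lemma wirtZ_const_mul (hf : DifferentiableAt ℝ f z) (c : ℂ) :
    wirtZ (fun w => c * f w) k z = c * wirtZ f k z := by
  simp only [wirtZ, fderiv_const_mul hf c, ContinuousLinearMap.smul_apply,
    smul_eq_mul]; ring

lemma wirtZBar_mul (hf : DifferentiableAt ℝ f z) (hg : DifferentiableAt ℝ g z) :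
    wirtZBar (fun w => f w * g w) k z
      = f z * wirtZBar g k z + g z * wirtZBar f k z := by
  simp only [wirtZBar_eq, fderiv_fun_mul hf hg, ContinuousLinearMap.add_apply,
    ContinuousLinearMap.smul_apply, smul_eq_mul]; ring

lemma wirtZ_mul (hf : DifferentiableAt ℝ f z) (hg : DifferentiableAt ℝ g z) :
    wirtZ (fun w => f w * g w) k z = f z * wirtZ g k z + g z * wirtZ f k z := by
  simp only [wirtZ, fderiv_fun_mul hf hg, ContinuousLinearMap.add_apply,
    ContinuousLinearMap.smul_apply, smul_eq_mul]; ring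

lemma wirtZBar_sum {ι : Type*} (s : Finset ι) (F : ι → (Fin n → ℂ) → ℂ)
    (hF : ∀ i ∈ s, DifferentiableAt ℝ (F i) z) :
    wirtZBar (fun w => ∑ i ∈ s, F i w) k z = ∑ i ∈ s, wirtZBar (F i) k z := by
  simp only [wirtZBar_eq, fderiv_fun_sum hF, ContinuousLinearMap.sum_apply]
  simp only [Finset.mul_sum, ← Finset.sum_add_distrib]

lemma wirtZ_sum {ι : Type*} (s : Finset ι) (F : ι → (Fin n → ℂ) → ℂ)
    (hF : ∀ i ∈ s, DifferentiableAt ℝ (F i) z) :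
    wirtZ (fun w => ∑ i ∈ s, F i w) k z = ∑ i ∈ s, wirtZ (F i) k z := by
  simp only [wirtZ, fderiv_fun_sum hF, ContinuousLinearMap.sum_apply]
  simp only [Finset.mul_sum, ← Finset.sum_sub_distrib]

-- coordinates
lemma diff_coord (j : Fin n) : Differentiable ℝ (fun z : Fin n → ℂ => z j) :=
  fun _ => (ContinuousLinearMap.proj (R := ℝ) (φ := fun _ : Fin n => ℂ) j).differentiableAt

lemma fderiv_coord (j : Fin n) (z v : Fin n → ℂ) :
    fderiv ℝ (fun z : Fin n → ℂ => z j) z v = v j := by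
  have h : (fun z : Fin n → ℂ => z j)
      = ⇑(ContinuousLinearMap.proj (R := ℝ) (φ := fun _ : Fin n => ℂ) j) := rfl
  rw [h, ContinuousLinearMap.fderiv]
  rfl

lemma ee_apply (j k : Fin n) : ee k j = if j = k then 1 else 0 := by
  simp [ee, Pi.single_apply]

lemma wirtZBar_coord (j : Fin n) : wirtZBar (fun z : Fin n → ℂ => z j) k z = 0 := by
  simp only [wirtZBar_eq, fderiv_coord, Pi.smul_apply, ee_apply, smul_eq_mul]
  by_cases h : j = k <;> simp [h]

lemma wirtZ_coord (j : Fin n) :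
    wirtZ (fun z : Fin n → ℂ => z j) k z = if j = k then 1 else 0 := by
  simp only [wirtZ, fderiv_coord, Pi.smul_apply, ee_apply, smul_eq_mul]
  by_cases h : j = k <;> simp [h] <;> norm_num



variable {n : ℕ}

variable {f g : (Fin n → ℂ) → ℂ} {z : Fin n → ℂ} {j k : Fin n}

-- conjugation
lemma diff_conj (hf : DifferentiableAt ℝ f z) :
    DifferentiableAt ℝ (fun w => (starRingEnd ℂ) (f w)) z :=
  (Complex.conjCLE.differentiable.differentiableAt).comp z hf

lemma fderiv_conj (hf : DifferentiableAt ℝ f z) (v : Fin n → ℂ) :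
    fderiv ℝ (fun w => (starRingEnd ℂ) (f w)) z v = (starRingEnd ℂ) (fderiv ℝ f z v) := by
  have : (fun w => (starRingEnd ℂ) (f w)) = ⇑Complex.conjCLE ∘ f := rfl
  rw [this, fderiv_comp z (Complex.conjCLE.differentiable.differentiableAt) hf]
  rw [ContinuousLinearEquiv.fderiv]; rfl

lemma wirtZ_conj (hf : DifferentiableAt ℝ f z) :
    wirtZ (fun w => (starRingEnd ℂ) (f w)) k z = (starRingEnd ℂ) (wirtZBar f k z) := by
  rw [wirtZ, wirtZBar_eq, fderiv_conj hf, fderiv_conj hf, map_mul, map_add, map_mul]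
  simp only [Complex.conj_I]
  simp only [map_div₀, map_one, map_ofNat]
  ring

lemma wirtZBar_conj (hf : DifferentiableAt ℝ f z) :
    wirtZBar (fun w => (starRingEnd ℂ) (f w)) k z = (starRingEnd ℂ) (wirtZ f k z) := by
  rw [wirtZBar_eq, wirtZ, fderiv_conj hf, fderiv_conj hf, map_mul, map_sub, map_mul]
  simp only [Complex.conj_I]
  simp only [map_div₀, map_one, map_ofNat]
  ring

lemma diff_coord_conj (j : Fin n) :
    Differentiable ℝ (fun z : Fin n → ℂ => (starRingEnd ℂ) (z j)) := by
  intro z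
  exact (Complex.conjCLE.differentiable.differentiableAt).comp z
    ((ContinuousLinearMap.proj (R := ℝ) (φ := fun _ : Fin n => ℂ) j).differentiableAt)

-- holomorphic => wirtZBar = 0
lemma wirtZBar_of_holo (hf : DifferentiableAt ℂ f z) : wirtZBar f k z = 0 := by
  rw [wirtZBar_eq, hf.fderiv_restrictScalars ℝ]
  simp only [ContinuousLinearMap.coe_restrictScalars', _root_.map_smul]
  simp [smul_eq_mul]
  have h3 : Complex.I * (Complex.I * (fderiv ℂ f z) (ee k)) = -(fderiv ℂ f z) (ee k) := by
    rw [← mul_assoc, Complex.I_mul_I]; ring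
  rw [h3]; ring

-- wirtZBar = 0 on open set => holomorphic
lemma holo_of_wirtZBar {U : Set (Fin n → ℂ)} (hU : IsOpen U)
    (hf : ∀ z ∈ U, DifferentiableAt ℝ f z)
    (h : ∀ k, ∀ z ∈ U, wirtZBar f k z = 0) :
    DifferentiableOn ℂ f U := by
  intro z hz
  have hd := hf z hz
  set L := fderiv ℝ f z with hL
  have hb : ∀ k, L (Complex.I • ee k) = Complex.I * L (ee k) := by
    intro k
    have h0 := h k z hz
    rw [wirtZBar_eq] at h0
    have h1 : L (ee k) + Complex.I * L (Complex.I • ee k) = 0 := by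
      field_simp at h0
      linear_combination h0
    have h2 : Complex.I * (L (ee k) + Complex.I * L (Complex.I • ee k)) = 0 := by
      rw [h1]; ring
    have h3 : Complex.I * L (ee k) - L (Complex.I • ee k) = 0 := by
      rw [← h2]; rw [mul_add, ← mul_assoc, Complex.I_mul_I]; ring
    linear_combination -h3
  have key : ∀ v, L (Complex.I • v) = Complex.I * L v := by
    intro v
    have hv := decomp v
    have expand : ∀ w : Fin n → ℂ, L w
        = ∑ m, ((w m).re • L (ee m) + (w m).im • L (Complex.I • ee m)) := by
      intro w
      conv_lhs => rw [decomp w]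
      rw [map_sum]
      simp
    rw [expand (Complex.I • v), expand v]
    rw [Finset.mul_sum]
    congr 1; funext m
    have hre : ((Complex.I • v : Fin n → ℂ) m).re = -((v m).im) := by simp
    have him : ((Complex.I • v : Fin n → ℂ) m).im = (v m).re := by simp
    rw [hre, him, hb m]
    simp only [Complex.real_smul]
    push_cast
    linear_combination (-(((v m).im : ℂ)) * L (ee m)) * Complex.I_mul_I
  -- build the complex-linear map
  let L' : (Fin n → ℂ) →L[ℂ] ℂ :=
    { toFun := fun v => L v
      map_add' := fun a b => by simp
      map_smul' := fun c v => by
        show L (c • v) = (RingHom.id ℂ) c • L v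
        have hc : c • v = (c.re : ℝ) • v + (c.im : ℝ) • (Complex.I • v) := by
          funext j
          simp only [Pi.add_apply, Pi.smul_apply, Complex.real_smul, smul_eq_mul]
          conv_lhs => rw [← Complex.re_add_im c]
          push_cast
          ring
        rw [hc, map_add, _root_.map_smul, _root_.map_smul, key]
        simp only [RingHom.id_apply, smul_eq_mul, Complex.real_smul]
        conv_rhs => rw [← Complex.re_add_im c]
        push_cast
        ring
      cont := L.cont }
  have : DifferentiableAt ℂ f z := by
    rw [differentiableAt_iff_restrictScalars ℝ hd]
    exact ⟨L', by ext v; rfl⟩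
  exact this.differentiableWithinAt



variable {n : ℕ}

variable {f g : (Fin n → ℂ) → ℂ} {U : Set (Fin n → ℂ)} {z z₀ : Fin n → ℂ} {j k : Fin n}

lemma two_le_top : (2 : WithTop ℕ∞) ≤ ((⊤:ℕ∞) : WithTop ℕ∞) := by
  have h : ((2:ℕ) : WithTop ℕ∞) ≤ ((⊤:ℕ∞) : WithTop ℕ∞) := by
    rw [show ((2:ℕ) : WithTop ℕ∞) = (((2:ℕ):ℕ∞) : WithTop ℕ∞) by norm_cast]
    exact WithTop.coe_le_coe.2 le_top
  simpa using h

lemma top_add_one_le : ((⊤ : ℕ∞) : WithTop ℕ∞) + 1 ≤ ((⊤ : ℕ∞) : WithTop ℕ∞) := by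
  norm_num

lemma diffAt_of_contDiffOn (hf : ContDiffOn ℝ (⊤ : ℕ∞) f U) (hU : IsOpen U) (hz : z ∈ U) :
    DifferentiableAt ℝ f z :=
  (hf.differentiableOn (by simp)).differentiableAt (hU.mem_nhds hz)

lemma contDiffOn_fderiv (hf : ContDiffOn ℝ (⊤ : ℕ∞) f U) (hU : IsOpen U) :
    ContDiffOn ℝ (⊤ : ℕ∞) (fderiv ℝ f) U :=
  hf.fderiv_of_isOpen hU top_add_one_le

lemma contDiffOn_wirtZBar (hf : ContDiffOn ℝ (⊤ : ℕ∞) f U) (hU : IsOpen U) (k : Fin n) :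
    ContDiffOn ℝ (⊤ : ℕ∞) (wirtZBar f k) U := by
  have h1 := contDiffOn_fderiv hf hU
  have h2 : ContDiffOn ℝ (⊤ : ℕ∞) (fun z => fderiv ℝ f z (ee k)) U :=
    h1.clm_apply contDiffOn_const
  have h3 : ContDiffOn ℝ (⊤ : ℕ∞) (fun z => fderiv ℝ f z (Complex.I • ee k)) U :=
    h1.clm_apply contDiffOn_const
  have : wirtZBar f k = fun z => (1 / 2 : ℂ) *
      (fderiv ℝ f z (ee k) + Complex.I * fderiv ℝ f z (Complex.I • ee k)) := by
    funext z; exact wirtZBar_eq f k z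
  rw [this]
  exact (h2.add (h3.const_smul Complex.I)).const_smul (1/2 : ℂ)

lemma contDiffOn_wirtZ (hf : ContDiffOn ℝ (⊤ : ℕ∞) f U) (hU : IsOpen U) (k : Fin n) :
    ContDiffOn ℝ (⊤ : ℕ∞) (wirtZ f k) U := by
  have h1 := contDiffOn_fderiv hf hU
  have h2 : ContDiffOn ℝ (⊤ : ℕ∞) (fun z => fderiv ℝ f z (ee k)) U :=
    h1.clm_apply contDiffOn_const
  have h3 : ContDiffOn ℝ (⊤ : ℕ∞) (fun z => fderiv ℝ f z (Complex.I • ee k)) U :=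
    h1.clm_apply contDiffOn_const
  exact ((h2.sub (h3.const_smul Complex.I)).const_smul (1/2 : ℂ))

lemma fderiv_apply_const (hf : ContDiffOn ℝ (⊤ : ℕ∞) f U) (hU : IsOpen U) (hz : z ∈ U)
    (w v : Fin n → ℂ) :
    fderiv ℝ (fun y => fderiv ℝ f y w) z v = fderiv ℝ (fderiv ℝ f) z v w := by
  have hFd : DifferentiableAt ℝ (fderiv ℝ f) z :=
    ((contDiffOn_fderiv hf hU).differentiableOn (by simp)).differentiableAt
      (hU.mem_nhds hz)
  rw [fderiv_clm_apply hFd (differentiableAt_const w)]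
  simp

lemma diffAt_fderiv_apply (hf : ContDiffOn ℝ (⊤ : ℕ∞) f U) (hU : IsOpen U) (hz : z ∈ U)
    (w : Fin n → ℂ) :
    DifferentiableAt ℝ (fun y => fderiv ℝ f y w) z := by
  have hFd : DifferentiableAt ℝ (fderiv ℝ f) z :=
    ((contDiffOn_fderiv hf hU).differentiableOn (by simp)).differentiableAt
      (hU.mem_nhds hz)
  exact hFd.clm_apply (differentiableAt_const w)

lemma fderiv_wirtZBar_apply (hf : ContDiffOn ℝ (⊤ : ℕ∞) f U) (hU : IsOpen U) (hz : z ∈ U)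
    (k : Fin n) (v : Fin n → ℂ) :
    fderiv ℝ (wirtZBar f k) z v = (1 / 2 : ℂ) *
      (fderiv ℝ (fderiv ℝ f) z v (ee k)
        + Complex.I * fderiv ℝ (fderiv ℝ f) z v (Complex.I • ee k)) := by
  have hA := diffAt_fderiv_apply hf hU hz (ee k)
  have hB := diffAt_fderiv_apply hf hU hz (Complex.I • ee k)
  have heq : wirtZBar f k = fun y => (1 / 2 : ℂ) *
      (fderiv ℝ f y (ee k) + Complex.I * fderiv ℝ f y (Complex.I • ee k)) := by
    funext y; exact wirtZBar_eq f k y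
  rw [heq, fderiv_const_mul (by exact hA.add (hB.const_mul Complex.I)) ((1:ℂ)/2),
    fderiv_fun_add hA (hB.const_mul Complex.I), fderiv_const_mul hB Complex.I]
  simp only [ContinuousLinearMap.smul_apply, ContinuousLinearMap.add_apply, smul_eq_mul]
  rw [fderiv_apply_const hf hU hz (ee k) v, fderiv_apply_const hf hU hz (Complex.I • ee k) v]

lemma fderiv_wirtZ_apply (hf : ContDiffOn ℝ (⊤ : ℕ∞) f U) (hU : IsOpen U) (hz : z ∈ U)
    (k : Fin n) (v : Fin n → ℂ) :
    fderiv ℝ (wirtZ f k) z v = (1 / 2 : ℂ) *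
      (fderiv ℝ (fderiv ℝ f) z v (ee k)
        - Complex.I * fderiv ℝ (fderiv ℝ f) z v (Complex.I • ee k)) := by
  have hA := diffAt_fderiv_apply hf hU hz (ee k)
  have hB := diffAt_fderiv_apply hf hU hz (Complex.I • ee k)
  have heq : wirtZ f k = fun y => (1 / 2 : ℂ) *
      (fderiv ℝ f y (ee k) - Complex.I * fderiv ℝ f y (Complex.I • ee k)) := rfl
  rw [heq, fderiv_const_mul (by exact hA.sub (hB.const_mul Complex.I)) ((1:ℂ)/2),
    fderiv_fun_sub hA (hB.const_mul Complex.I), fderiv_const_mul hB Complex.I]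
  simp only [ContinuousLinearMap.smul_apply, ContinuousLinearMap.sub_apply, smul_eq_mul]
  rw [fderiv_apply_const hf hU hz (ee k) v, fderiv_apply_const hf hU hz (Complex.I • ee k) v]

lemma sym (hf : ContDiffOn ℝ (⊤ : ℕ∞) f U) (hU : IsOpen U) (hz : z ∈ U) (v w : Fin n → ℂ) :
    fderiv ℝ (fderiv ℝ f) z v w = fderiv ℝ (fderiv ℝ f) z w v := by
  have hca : ContDiffAt ℝ (⊤ : ℕ∞) f z := hf.contDiffAt (hU.mem_nhds hz)
  exact (hca.isSymmSndFDerivAt (by simpa using two_le_top)).eq v w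

/-- mixed Wirtinger derivatives commute. -/
lemma wirt_comm (hf : ContDiffOn ℝ (⊤ : ℕ∞) f U) (hU : IsOpen U) (hz : z ∈ U) (j k : Fin n) :
    wirtZ (wirtZBar f k) j z = wirtZBar (wirtZ f j) k z := by
  rw [wirtZ, wirtZBar_eq,
    fderiv_wirtZBar_apply hf hU hz k (ee j),
    fderiv_wirtZBar_apply hf hU hz k (Complex.I • ee j),
    fderiv_wirtZ_apply hf hU hz j (ee k),
    fderiv_wirtZ_apply hf hU hz j (Complex.I • ee k),
    sym hf hU hz (ee j) (ee k), sym hf hU hz (ee j) (Complex.I • ee k),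
    sym hf hU hz (Complex.I • ee j) (ee k),
    sym hf hU hz (Complex.I • ee j) (Complex.I • ee k)]
  ring

lemma wirtZBar_congr (hU : IsOpen U) (hz : z ∈ U) (h : Set.EqOn f g U) :
    wirtZBar f k z = wirtZBar g k z := by
  have hfd : fderiv ℝ f z = fderiv ℝ g z :=
    Filter.EventuallyEq.fderiv_eq (h.eventuallyEq_of_mem (hU.mem_nhds hz))
  rw [wirtZBar_eq, wirtZBar_eq, hfd]

lemma wirtZ_congr (hU : IsOpen U) (hz : z ∈ U) (h : Set.EqOn f g U) :
    wirtZ f k z = wirtZ g k z := by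
  have hfd : fderiv ℝ f z = fderiv ℝ g z :=
    Filter.EventuallyEq.fderiv_eq (h.eventuallyEq_of_mem (hU.mem_nhds hz))
  rw [wirtZ, wirtZ, hfd]

lemma wirtZBar_zero_fn : wirtZBar (fun _ : Fin n → ℂ => (0:ℂ)) k z = 0 := by
  simp [wirtZBar_eq, fderiv_const]

lemma wirtZ_zero_fn : wirtZ (fun _ : Fin n → ℂ => (0:ℂ)) k z = 0 := by
  simp [wirtZ, fderiv_const]

lemma fderiv_eq_zero_of_wirt (hf : DifferentiableAt ℝ f z)
    (h1 : ∀ m, wirtZ f m z = 0) (h2 : ∀ m, wirtZBar f m z = 0) :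
    fderiv ℝ f z = 0 := by
  apply ContinuousLinearMap.ext
  intro v
  rw [ContinuousLinearMap.zero_apply]
  apply clm_ext_basis
  · intro m; rw [apply_ee, h1 m, h2 m, add_zero]
  · intro m; rw [apply_Iee, h1 m, h2 m]; ring

lemma const_of_fderiv_zero (hU : IsOpen U) (hc : Convex ℝ U)
    (hfd : ∀ z ∈ U, DifferentiableAt ℝ f z)
    (h : ∀ z ∈ U, fderiv ℝ f z = 0) (hz : z ∈ U) (hz₀ : z₀ ∈ U) : f z = f z₀ := by
  have := hc.norm_image_sub_le_of_norm_fderiv_le (C := 0) hfd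
    (fun x hx => by simp [h x hx]) hz₀ hz
  have h0 : ‖f z - f z₀‖ ≤ 0 := by simpa using this
  have h1 := norm_le_zero_iff.1 h0
  exact sub_eq_zero.1 h1
  
lemma eq_affine (hU : IsOpen U) (hc : Convex ℝ U)
    (hfd : ∀ z ∈ U, DifferentiableAt ℝ f z)
    (hconst : ∀ z ∈ U, fderiv ℝ f z = fderiv ℝ f z₀) (hz₀ : z₀ ∈ U) :
    ∀ z ∈ U, f z = f z₀ + fderiv ℝ f z₀ (z - z₀) := by
  set L := fderiv ℝ f z₀ with hL
  have hg : ∀ z ∈ U, fderiv ℝ (fun y => f y - L y) z = 0 := by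
    intro z hz
    rw [fderiv_fun_sub (hfd z hz) L.differentiableAt, L.fderiv, hconst z hz, sub_self]
  intro z hz
  have h1 : f z - L z = f z₀ - L z₀ :=
    const_of_fderiv_zero hU hc
      (fun x hx => (hfd x hx).sub L.differentiableAt) hg hz hz₀
  have h2 : L z - L z₀ = L (z - z₀) := by rw [map_sub]
  linear_combination h1 + h2



variable {n : ℕ}

lemma continuous_normSq' : Continuous (normSq' (n := n)) := by
  unfold normSq'
  exact continuous_finset_sum _ fun i _ => Complex.continuous_normSq.comp (continuous_apply i)

lemma isOpen_unitBall : IsOpen (unitBall n) :=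
  isOpen_lt continuous_normSq' continuous_const

lemma zero_mem_unitBall : (0 : Fin n → ℂ) ∈ unitBall n := by
  simp [unitBall, normSq', Set.mem_setOf_eq]

lemma convex_unitBall : Convex ℝ (unitBall n) := by
  intro x hx y hy a b ha hb hab
  -- use that sqrt ∘ normSq' is a seminorm-like quantity via EuclideanSpace
  have key : ∀ z : Fin n → ℂ, normSq' z
      = ‖(WithLp.equiv 2 (Fin n → ℂ)).symm z‖ ^ 2 := by
    intro z
    rw [EuclideanSpace.norm_eq]
    rw [Real.sq_sqrt (by positivity)]
    unfold normSq'
    congr 1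
    funext i
    rw [← Complex.sq_norm]
    rfl
  have hx' : ‖(WithLp.equiv 2 (Fin n → ℂ)).symm x‖ < 1 := by
    have := hx
    simp only [unitBall, Set.mem_setOf_eq, key] at this
    nlinarith [norm_nonneg ((WithLp.equiv 2 (Fin n → ℂ)).symm x)]
  have hy' : ‖(WithLp.equiv 2 (Fin n → ℂ)).symm y‖ < 1 := by
    have := hy
    simp only [unitBall, Set.mem_setOf_eq, key] at this
    nlinarith [norm_nonneg ((WithLp.equiv 2 (Fin n → ℂ)).symm y)]
  show normSq' (a • x + b • y) < 1
  rw [key]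
  have hlin : (WithLp.equiv 2 (Fin n → ℂ)).symm (a • x + b • y)
      = a • (WithLp.equiv 2 (Fin n → ℂ)).symm x + b • (WithLp.equiv 2 (Fin n → ℂ)).symm y := rfl
  rw [hlin]
  have : ‖a • (WithLp.equiv 2 (Fin n → ℂ)).symm x + b • (WithLp.equiv 2 (Fin n → ℂ)).symm y‖
      ≤ a * ‖(WithLp.equiv 2 (Fin n → ℂ)).symm x‖ + b * ‖(WithLp.equiv 2 (Fin n → ℂ)).symm y‖ := by
    calc _ ≤ ‖a • (WithLp.equiv 2 (Fin n → ℂ)).symm x‖ + ‖b • (WithLp.equiv 2 (Fin n → ℂ)).symm y‖ :=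
        norm_add_le _ _
    _ = a * ‖(WithLp.equiv 2 (Fin n → ℂ)).symm x‖ + b * ‖(WithLp.equiv 2 (Fin n → ℂ)).symm y‖ := by
        rw [norm_smul, norm_smul, Real.norm_of_nonneg ha, Real.norm_of_nonneg hb]
  have hS : ‖a • (WithLp.equiv 2 (Fin n → ℂ)).symm x + b • (WithLp.equiv 2 (Fin n → ℂ)).symm y‖ < 1 :=
    lt_of_le_of_lt this (by
      rcases eq_or_lt_of_le ha with h|h
      · rw [← h]; simp only [zero_mul, zero_add]
        have hb1 : b = 1 := by linarith
        rw [hb1]; simpa using hy'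
      · nlinarith [mul_lt_mul_of_pos_left hx' h, mul_nonneg hb (sub_nonneg.2 hy'.le)])
  have h0 : (0:ℝ) ≤ ‖a • (WithLp.equiv 2 (Fin n → ℂ)).symm x + b • (WithLp.equiv 2 (Fin n → ℂ)).symm y‖ :=
    norm_nonneg _
  nlinarith



variable {n : ℕ}
variable {f g : (Fin n → ℂ) → ℂ} {z : Fin n → ℂ} {j k : Fin n}

variable {z : Fin n → ℂ} {j k m : Fin n}

lemma wirtZBar_coord_conj (j : Fin n) :
    wirtZBar (fun z : Fin n → ℂ => (starRingEnd ℂ) (z j)) k z = if j = k then 1 else 0 := by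
  rw [wirtZBar_conj (diff_coord j z), wirtZ_coord j]
  split <;> simp

lemma wirtZ_coord_conj (j : Fin n) :
    wirtZ (fun z : Fin n → ℂ => (starRingEnd ℂ) (z j)) k z = 0 := by
  rw [wirtZ_conj (diff_coord j z), wirtZBar_coord j]
  simp

-- real-valued functions as complex
lemma diff_ofReal {ψ : (Fin n → ℂ) → ℝ} (hψ : DifferentiableAt ℝ ψ z) :
    DifferentiableAt ℝ (fun w => ((ψ w : ℝ) : ℂ)) z :=
  Complex.ofRealCLM.differentiableAt.comp z hψ

lemma contDiffOn_ofReal {ψ : (Fin n → ℂ) → ℝ} {U : Set (Fin n → ℂ)}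
    (hψ : ContDiffOn ℝ (⊤ : ℕ∞) ψ U) :
    ContDiffOn ℝ (⊤ : ℕ∞) (fun w => ((ψ w : ℝ) : ℂ)) U :=
  Complex.ofRealCLM.contDiff.comp_contDiffOn hψ

lemma conj_ofReal_fn (ψ : (Fin n → ℂ) → ℝ) :
    (fun w => (starRingEnd ℂ) ((ψ w : ℝ) : ℂ)) = fun w => ((ψ w : ℝ) : ℂ) := by
  funext w; exact Complex.conj_ofReal _

-- complex form of normSq'
lemma normSq'_ofReal :
    (fun z : Fin n → ℂ => ((normSq' z : ℝ) : ℂ))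
      = fun z : Fin n → ℂ => ∑ l, z l * (starRingEnd ℂ) (z l) := by
  funext z
  unfold normSq'
  push_cast
  congr 1
  funext l
  rw [Complex.mul_conj]

lemma diff_normSq'_ofReal :
    Differentiable ℝ (fun z : Fin n → ℂ => ((normSq' z : ℝ) : ℂ)) := by
  rw [normSq'_ofReal]
  exact Differentiable.fun_sum fun l _ => (diff_coord l).mul (diff_coord_conj l)

lemma wirtZBar_normSq' :
    wirtZBar (fun z : Fin n → ℂ => ((normSq' z : ℝ) : ℂ)) k z = z k := by
  rw [normSq'_ofReal]
  rw [wirtZBar_sum Finset.univ _ (fun l _ => ((diff_coord l).fun_mul (diff_coord_conj l)) z)]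
  have : ∀ l, wirtZBar (fun w : Fin n → ℂ => w l * (starRingEnd ℂ) (w l)) k z
      = if l = k then z l else 0 := by
    intro l
    rw [wirtZBar_mul (diff_coord l z) (diff_coord_conj l z), wirtZBar_coord_conj l,
      wirtZBar_coord l]
    split <;> simp
  simp only [this]
  simp

lemma wirtZ_normSq' :
    wirtZ (fun z : Fin n → ℂ => ((normSq' z : ℝ) : ℂ)) k z = (starRingEnd ℂ) (z k) := by
  rw [normSq'_ofReal]
  rw [wirtZ_sum Finset.univ _ (fun l _ => ((diff_coord l).fun_mul (diff_coord_conj l)) z)]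
  have : ∀ l, wirtZ (fun w : Fin n → ℂ => w l * (starRingEnd ℂ) (w l)) k z
      = if l = k then (starRingEnd ℂ) (z l) else 0 := by
    intro l
    rw [wirtZ_mul (diff_coord l z) (diff_coord_conj l z), wirtZ_coord_conj l, wirtZ_coord l]
    split <;> simp
  simp only [this]
  simp

-- linear part
lemma diff_lin (α : Fin n → ℂ) :
    Differentiable ℝ (fun z : Fin n → ℂ => ∑ l, α l * z l) :=
  Differentiable.fun_sum fun l _ => (diff_coord l).const_mul (α l)

lemma wirtZBar_lin (α : Fin n → ℂ) :
    wirtZBar (fun z : Fin n → ℂ => ∑ l, α l * z l) k z = 0 := by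
  rw [wirtZBar_sum Finset.univ _ (fun l _ => ((diff_coord l).const_mul (α l)) z)]
  have : ∀ l, wirtZBar (fun w : Fin n → ℂ => α l * w l) k z = 0 := fun l => by
    rw [wirtZBar_const_mul (diff_coord l z), wirtZBar_coord l, mul_zero]
  simp [this]

lemma wirtZ_lin (α : Fin n → ℂ) :
    wirtZ (fun z : Fin n → ℂ => ∑ l, α l * z l) k z = α k := by
  rw [wirtZ_sum Finset.univ _ (fun l _ => ((diff_coord l).const_mul (α l)) z)]
  have : ∀ l, wirtZ (fun w : Fin n → ℂ => α l * w l) k z = if l = k then α l else 0 := by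
    intro l
    rw [wirtZ_const_mul (diff_coord l z), wirtZ_coord l]
    split <;> simp
  simp only [this]
  simp

-- conjugate-linear part
lemma diff_linbar (α : Fin n → ℂ) :
    Differentiable ℝ (fun z : Fin n → ℂ => ∑ l, (starRingEnd ℂ) (α l * z l)) :=
  Differentiable.fun_sum fun l _ => by
    simpa [map_mul] using (diff_coord_conj l).const_mul ((starRingEnd ℂ) (α l))

-- quadratic part
lemma diff_quad (c : Matrix (Fin n) (Fin n) ℂ) :
    Differentiable ℝ (fun z : Fin n → ℂ => ∑ j, ∑ k, c j k * z j * (starRingEnd ℂ) (z k)) :=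
  Differentiable.fun_sum fun j _ => Differentiable.fun_sum fun k _ =>
    (((diff_coord j).const_mul (c j k)).mul (diff_coord_conj k))

lemma wirtZBar_quad (c : Matrix (Fin n) (Fin n) ℂ) :
    wirtZBar (fun z : Fin n → ℂ => ∑ j, ∑ k, c j k * z j * (starRingEnd ℂ) (z k)) m z
      = ∑ j, c j m * z j := by
  have hd : ∀ j (_ : j ∈ Finset.univ), DifferentiableAt ℝ
      (fun z : Fin n → ℂ => ∑ k, c j k * z j * (starRingEnd ℂ) (z k)) z :=
    fun j _ => (Differentiable.fun_sum fun k _ =>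
      (((diff_coord j).const_mul (c j k)).mul (diff_coord_conj k))) z
  rw [wirtZBar_sum Finset.univ _ hd]
  have : ∀ j, wirtZBar (fun z : Fin n → ℂ => ∑ k, c j k * z j * (starRingEnd ℂ) (z k)) m z
      = c j m * z j := by
    intro j
    have hd2 : ∀ k (_ : k ∈ Finset.univ), DifferentiableAt ℝ
        (fun z : Fin n → ℂ => c j k * z j * (starRingEnd ℂ) (z k)) z :=
      fun k _ => (((diff_coord j).const_mul (c j k)).mul (diff_coord_conj k)) z
    rw [wirtZBar_sum Finset.univ _ hd2]
    have : ∀ k, wirtZBar (fun z : Fin n → ℂ => c j k * z j * (starRingEnd ℂ) (z k)) m z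
        = if k = m then c j k * z j else 0 := by
      intro k
      have e1 : (fun z : Fin n → ℂ => c j k * z j * (starRingEnd ℂ) (z k))
          = fun z : Fin n → ℂ => (c j k * z j) * (starRingEnd ℂ) (z k) := rfl
      rw [e1, wirtZBar_mul (((diff_coord j).const_mul (c j k)) z) (diff_coord_conj k z),
        wirtZBar_coord_conj k, wirtZBar_const_mul (diff_coord j z), wirtZBar_coord j]
      split <;> simp
    simp only [this]
    simp
  simp only [this]

lemma wirtZ_quad (c : Matrix (Fin n) (Fin n) ℂ) :
    wirtZ (fun z : Fin n → ℂ => ∑ j, ∑ k, c j k * z j * (starRingEnd ℂ) (z k)) m z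
      = ∑ k, c m k * (starRingEnd ℂ) (z k) := by
  have hd : ∀ j (_ : j ∈ Finset.univ), DifferentiableAt ℝ
      (fun z : Fin n → ℂ => ∑ k, c j k * z j * (starRingEnd ℂ) (z k)) z :=
    fun j _ => (Differentiable.fun_sum fun k _ =>
      (((diff_coord j).const_mul (c j k)).mul (diff_coord_conj k))) z
  rw [wirtZ_sum Finset.univ _ hd]
  have key : ∀ j, wirtZ (fun z : Fin n → ℂ => ∑ k, c j k * z j * (starRingEnd ℂ) (z k)) m z
      = if j = m then ∑ k, c j k * (starRingEnd ℂ) (z k) else 0 := by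
    intro j
    have hd2 : ∀ k (_ : k ∈ Finset.univ), DifferentiableAt ℝ
        (fun z : Fin n → ℂ => c j k * z j * (starRingEnd ℂ) (z k)) z :=
      fun k _ => (((diff_coord j).const_mul (c j k)).mul (diff_coord_conj k)) z
    rw [wirtZ_sum Finset.univ _ hd2]
    have : ∀ k, wirtZ (fun z : Fin n → ℂ => c j k * z j * (starRingEnd ℂ) (z k)) m z
        = if j = m then c j k * (starRingEnd ℂ) (z k) else 0 := by
      intro k
      have e1 : (fun z : Fin n → ℂ => c j k * z j * (starRingEnd ℂ) (z k))
          = fun z : Fin n → ℂ => (c j k * z j) * (starRingEnd ℂ) (z k) := rfl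
      rw [e1, wirtZ_mul (((diff_coord j).const_mul (c j k)) z) (diff_coord_conj k z),
        wirtZ_coord_conj k, wirtZ_const_mul (diff_coord j z), wirtZ_coord j]
      split <;> simp <;> ring
    simp only [this]
    split <;> simp
  simp only [key]
  simp

-- real part of linear form
lemma rePart_eq (α : Fin n → ℂ) :
    (fun z : Fin n → ℂ => (((∑ l, α l * z l).re : ℝ) : ℂ))
      = fun z : Fin n → ℂ =>
        (1/2 : ℂ) * ((∑ l, α l * z l) + ∑ l, (starRingEnd ℂ) (α l * z l)) := by
  funext z
  rw [← map_sum]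
  rw [Complex.add_conj]
  push_cast
  ring

lemma diff_rePart (α : Fin n → ℂ) :
    Differentiable ℝ (fun z : Fin n → ℂ => (((∑ l, α l * z l).re : ℝ) : ℂ)) := by
  rw [rePart_eq]
  exact (((diff_lin α).add (diff_linbar α))).const_mul _

lemma wirtZBar_rePart (α : Fin n → ℂ) :
    wirtZBar (fun z : Fin n → ℂ => (((∑ l, α l * z l).re : ℝ) : ℂ)) k z
      = (starRingEnd ℂ) (α k) / 2 := by
  rw [rePart_eq]
  rw [wirtZBar_const_mul (((diff_lin α).fun_add (diff_linbar α)) z)]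
  rw [wirtZBar_add ((diff_lin α) z) ((diff_linbar α) z)]
  rw [wirtZBar_lin]
  have e1 : (fun z : Fin n → ℂ => ∑ l, (starRingEnd ℂ) (α l * z l))
      = fun z : Fin n → ℂ => (starRingEnd ℂ) (∑ l, α l * z l) := by
    funext z; rw [map_sum]
  rw [e1, wirtZBar_conj ((diff_lin α) z), wirtZ_lin]
  ring

lemma wirtZ_rePart (α : Fin n → ℂ) :
    wirtZ (fun z : Fin n → ℂ => (((∑ l, α l * z l).re : ℝ) : ℂ)) k z = α k / 2 := by
  rw [rePart_eq]
  rw [wirtZ_const_mul (((diff_lin α).fun_add (diff_linbar α)) z)]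
  rw [wirtZ_add ((diff_lin α) z) ((diff_linbar α) z)]
  rw [wirtZ_lin]
  have e1 : (fun z : Fin n → ℂ => ∑ l, (starRingEnd ℂ) (α l * z l))
      = fun z : Fin n → ℂ => (starRingEnd ℂ) (∑ l, α l * z l) := by
    funext z; rw [map_sum]
  rw [e1, wirtZ_conj ((diff_lin α) z), wirtZBar_lin]
  simp
  ring


-- ## theorem-specific auxiliary lemmas

section Main

variable {z : Fin n → ℂ} {j k m : Fin n}

lemma topN : ((⊤ : ℕ∞) : WithTop ℕ∞) = (⊤ : ℕ∞) := rfl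

lemma contDiff_coord (j : Fin n) : ContDiff ℝ (⊤ : ℕ∞) (fun z : Fin n → ℂ => z j) :=
  (ContinuousLinearMap.proj (R := ℝ) (φ := fun _ : Fin n => ℂ) j).contDiff

lemma contDiff_coord_conj (j : Fin n) :
    ContDiff ℝ (⊤ : ℕ∞) (fun z : Fin n → ℂ => (starRingEnd ℂ) (z j)) :=
  Complex.conjCLE.contDiff.comp (contDiff_coord j)

lemma contDiff_normSq'c :
    ContDiff ℝ (⊤ : ℕ∞) (fun z : Fin n → ℂ => ((normSq' z : ℝ) : ℂ)) := by
  rw [normSq'_ofReal]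
  exact ContDiff.sum fun l _ => (contDiff_coord l).mul (contDiff_coord_conj l)

lemma rho_eq : (fun z : Fin n → ℂ => ((1 - normSq' z : ℝ) : ℂ))
    = fun z : Fin n → ℂ => 1 - ((normSq' z : ℝ) : ℂ) := by
  funext z; push_cast; ring

lemma contDiff_rho : ContDiff ℝ (⊤ : ℕ∞) (fun z : Fin n → ℂ => ((1 - normSq' z : ℝ) : ℂ)) := by
  rw [rho_eq]; exact contDiff_const.sub contDiff_normSq'c

lemma diff_rho : Differentiable ℝ (fun z : Fin n → ℂ => ((1 - normSq' z : ℝ) : ℂ)) :=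
  contDiff_rho.differentiable (by simp)

lemma wirtZBar_rho :
    wirtZBar (fun z : Fin n → ℂ => ((1 - normSq' z : ℝ) : ℂ)) k z = -(z k) := by
  rw [rho_eq]
  have := wirtZBar_sub (f := fun _ : Fin n → ℂ => (1:ℂ))
    (g := fun z : Fin n → ℂ => ((normSq' z : ℝ) : ℂ)) (k := k) (z := z)
    (differentiableAt_const _) (diff_normSq'_ofReal z)
  rw [this, wirtZBar_const, wirtZBar_normSq']
  ring

lemma contDiff_quad (c : Matrix (Fin n) (Fin n) ℂ) :
    ContDiff ℝ (⊤ : ℕ∞)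
      (fun z : Fin n → ℂ => ∑ j, ∑ k, c j k * z j * (starRingEnd ℂ) (z k)) :=
  ContDiff.sum fun j _ => ContDiff.sum fun k _ =>
    ((contDiff_const.mul (contDiff_coord j)).mul (contDiff_coord_conj k))

variable {φ : (Fin n → ℂ) → ℝ}

lemma psi_rep (φ : (Fin n → ℂ) → ℝ) :
    (fun w => (((1 - normSq' w) * φ w : ℝ) : ℂ))
      = fun w => ((1 - normSq' w : ℝ) : ℂ) * ((φ w : ℝ) : ℂ) := by
  funext w; push_cast; ring

lemma contDiffOn_psi {U : Set (Fin n → ℂ)} (hφ : ContDiffOn ℝ (⊤ : ℕ∞) φ U) :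
    ContDiffOn ℝ (⊤ : ℕ∞) (fun w => (((1 - normSq' w) * φ w : ℝ) : ℂ)) U := by
  rw [psi_rep]
  exact contDiff_rho.contDiffOn.mul (contDiffOn_ofReal hφ)

/-- key pointwise identity `∂̄ⱼψ = (1-|z|²)∂̄ⱼφ - zⱼφ`. -/
lemma IdA (hφd : DifferentiableAt ℝ φ z) (l : Fin n) :
    wirtZBar (fun w => (((1 - normSq' w) * φ w : ℝ) : ℂ)) l z
      = ((1 - normSq' z : ℝ) : ℂ) * wirtZBarR φ l z - z l * ((φ z : ℝ) : ℂ) := by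
  rw [psi_rep, wirtZBar_mul (diff_rho z) (diff_ofReal hφd), wirtZBar_rho]
  unfold wirtZBarR
  ring

/-- the statement's gradient component in terms of `ψ`. -/
lemma G_eq_F (hφd : DifferentiableAt ℝ φ z) (j : Fin n) :
    ((1 - normSq' z : ℝ) : ℂ) *
        (wirtZBarR φ j z - z j * ∑ l, (starRingEnd ℂ) (z l) * wirtZBarR φ l z)
      = wirtZBar (fun w => (((1 - normSq' w) * φ w : ℝ) : ℂ)) j z
        + z j * ((((1 - normSq' z) * φ z : ℝ) : ℂ)
          - ∑ l, (starRingEnd ℂ) (z l)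
              * wirtZBar (fun w => (((1 - normSq' w) * φ w : ℝ) : ℂ)) l z) := by
  have hsum : ∑ l, (starRingEnd ℂ) (z l)
        * wirtZBar (fun w => (((1 - normSq' w) * φ w : ℝ) : ℂ)) l z
      = ((1 - normSq' z : ℝ) : ℂ)
          * (∑ l, (starRingEnd ℂ) (z l) * wirtZBarR φ l z)
        - (∑ l, z l * (starRingEnd ℂ) (z l)) * ((φ z : ℝ) : ℂ) := by
    rw [Finset.mul_sum, Finset.sum_mul, ← Finset.sum_sub_distrib]
    congr 1; funext l
    rw [IdA hφd l]; ring
  have hs : (∑ l, z l * (starRingEnd ℂ) (z l)) = ((normSq' z : ℝ) : ℂ) :=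
    (congrFun normSq'_ofReal z).symm
  have hψval : (((1 - normSq' z) * φ z : ℝ) : ℂ)
      = ((1 - normSq' z : ℝ) : ℂ) * ((φ z : ℝ) : ℂ) := by push_cast; ring
  have hcast : ((1 - normSq' z : ℝ) : ℂ) = 1 - ((normSq' z : ℝ) : ℂ) := by push_cast; ring
  rw [hsum, IdA hφd j, hψval, hs, hcast]
  ring

end Main

section Extras

variable {z : Fin n → ℂ} {j k m : Fin n}

lemma diff_linbar2 (β : Fin n → ℂ) :
    Differentiable ℝ (fun z : Fin n → ℂ => ∑ l, β l * (starRingEnd ℂ) (z l)) :=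
  Differentiable.fun_sum fun l _ => (diff_coord_conj l).const_mul (β l)

lemma wirtZ_linbar2 (β : Fin n → ℂ) :
    wirtZ (fun z : Fin n → ℂ => ∑ l, β l * (starRingEnd ℂ) (z l)) m z = 0 := by
  rw [wirtZ_sum Finset.univ _ (fun l _ => ((diff_coord_conj l).const_mul (β l)) z)]
  have : ∀ l, wirtZ (fun w : Fin n → ℂ => β l * (starRingEnd ℂ) (w l)) m z = 0 := fun l => by
    rw [wirtZ_const_mul (diff_coord_conj l z), wirtZ_coord_conj l, mul_zero]
  simp [this]

lemma wirtZBar_linbar2 (β : Fin n → ℂ) :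
    wirtZBar (fun z : Fin n → ℂ => ∑ l, β l * (starRingEnd ℂ) (z l)) m z = β m := by
  rw [wirtZBar_sum Finset.univ _ (fun l _ => ((diff_coord_conj l).const_mul (β l)) z)]
  have : ∀ l, wirtZBar (fun w : Fin n → ℂ => β l * (starRingEnd ℂ) (w l)) m z
      = if l = m then β l else 0 := by
    intro l
    rw [wirtZBar_const_mul (diff_coord_conj l z), wirtZBar_coord_conj l]
    split <;> simp
  simp only [this]
  simp

lemma clm_eq_basis (L1 L2 : (Fin n → ℂ) →L[ℝ] ℂ)
    (h1 : ∀ k, L1 (ee k) = L2 (ee k))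
    (h2 : ∀ k, L1 (Complex.I • ee k) = L2 (Complex.I • ee k)) : L1 = L2 := by
  apply ContinuousLinearMap.ext
  intro v
  have := clm_ext_basis (L1 - L2)
    (fun k => by simp [h1 k]) (fun k => by simp [h2 k]) v
  simpa [sub_eq_zero] using this

lemma diffC_coord (j : Fin n) : Differentiable ℂ (fun z : Fin n → ℂ => z j) :=
  fun _ => (ContinuousLinearMap.proj (R := ℂ) (φ := fun _ : Fin n => ℂ) j).differentiableAt

lemma re_cast_eq (w : ℂ) : ((w.re : ℝ) : ℂ) = (w + (starRingEnd ℂ) w) / 2 := by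
  rw [Complex.add_conj]
  push_cast
  ring

end Extras

section Recover

variable {z : Fin n → ℂ}

/-- From vanishing of all second `∂̄∂̄` derivatives of a real smooth function on the
ball, recover the quadratic-affine form. -/
lemma main_recover (ψ : (Fin n → ℂ) → ℂ)
    (hψsm : ContDiffOn ℝ (⊤ : ℕ∞) ψ (unitBall n))
    (hψreal : ∀ w, (starRingEnd ℂ) (ψ w) = ψ w)
    (hC0 : ∀ a b : Fin n, ∀ z ∈ unitBall n, wirtZBar (wirtZBar ψ a) b z = 0) :
    ∃ c : Matrix (Fin n) (Fin n) ℂ, c.IsHermitian ∧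
      ∃ α : Fin n → ℂ, ∃ γ : ℝ,
        ∀ z ∈ unitBall n,
          ψ z = (∑ j, ∑ k, c j k * z j * (starRingEnd ℂ) (z k)) +
            (((∑ k, α k * z k).re : ℝ) : ℂ) + (γ : ℂ) := by
  have hU : IsOpen (unitBall n) := isOpen_unitBall
  have hconv : Convex ℝ (unitBall n) := convex_unitBall
  have h0U : (0 : Fin n → ℂ) ∈ unitBall n := zero_mem_unitBall
  have hψd : ∀ z ∈ unitBall n, DifferentiableAt ℝ ψ z := fun z hz =>
    diffAt_of_contDiffOn hψsm hU hz
  have hBsm : ∀ l : Fin n, ContDiffOn ℝ (⊤ : ℕ∞) (wirtZBar ψ l) (unitBall n) := fun l =>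
    contDiffOn_wirtZBar hψsm hU l
  have hBd : ∀ l : Fin n, ∀ z ∈ unitBall n, DifferentiableAt ℝ (wirtZBar ψ l) z :=
    fun l z hz => diffAt_of_contDiffOn (hBsm l) hU hz
  -- ∂ψ is conjugate of ∂̄ψ
  have hψconjEq : Set.EqOn ψ (fun w => (starRingEnd ℂ) (ψ w)) (unitBall n) := fun w _ =>
    (hψreal w).symm
  have hZconjB : ∀ a : Fin n, Set.EqOn (wirtZ ψ a)
      (fun w => (starRingEnd ℂ) (wirtZBar ψ a w)) (unitBall n) := by
    intro a w hw
    have h1 : wirtZ ψ a w = wirtZ (fun v => (starRingEnd ℂ) (ψ v)) a w :=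
      wirtZ_congr hU hw hψconjEq
    rw [h1, wirtZ_conj (hψd w hw)]
  -- the mixed second derivatives
  have hMbar0 : ∀ a b m : Fin n, ∀ z ∈ unitBall n,
      wirtZBar (wirtZ (wirtZBar ψ b) a) m z = 0 := by
    intro a b m z hz
    have h1 := wirt_comm (hBsm b) hU hz a m
    rw [← h1]
    have h2 : Set.EqOn (wirtZBar (wirtZBar ψ b) m) (fun _ => (0 : ℂ)) (unitBall n) :=
      fun w hw => hC0 b m w hw
    rw [wirtZ_congr hU hz h2, wirtZ_zero_fn]
  have hMherm : ∀ a b : Fin n, Set.EqOn (wirtZ (wirtZBar ψ b) a)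
      (fun w => (starRingEnd ℂ) (wirtZ (wirtZBar ψ a) b w)) (unitBall n) := by
    intro a b z hz
    have h1 := wirt_comm hψsm hU hz a b
    show wirtZ (wirtZBar ψ b) a z = (starRingEnd ℂ) (wirtZ (wirtZBar ψ a) b z)
    rw [h1, wirtZBar_congr hU hz (hZconjB a), wirtZBar_conj (hBd a z hz)]
  have hMz0 : ∀ a b m : Fin n, ∀ z ∈ unitBall n,
      wirtZ (wirtZ (wirtZBar ψ b) a) m z = 0 := by
    intro a b m z hz
    rw [wirtZ_congr hU hz (hMherm a b)]
    rw [wirtZ_conj (diffAt_of_contDiffOn (contDiffOn_wirtZ (hBsm a) hU b) hU hz)]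
    rw [hMbar0 b a m z hz, map_zero]
  have hMconst : ∀ a b : Fin n, ∀ z ∈ unitBall n,
      wirtZ (wirtZBar ψ b) a z = wirtZ (wirtZBar ψ b) a 0 := by
    intro a b z hz
    exact const_of_fderiv_zero hU hconv
      (fun w hw => diffAt_of_contDiffOn (contDiffOn_wirtZ (hBsm b) hU a) hU hw)
      (fun w hw => fderiv_eq_zero_of_wirt
        (diffAt_of_contDiffOn (contDiffOn_wirtZ (hBsm b) hU a) hU hw)
        (fun m => hMz0 a b m w hw) (fun m => hMbar0 a b m w hw)) hz h0U
  -- the Hermitian matrix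
  set cM : Matrix (Fin n) (Fin n) ℂ := fun a b => wirtZ (wirtZBar ψ b) a 0 with hcMdef
  have hcMsymm : ∀ a b, cM b a = (starRingEnd ℂ) (cM a b) := fun a b => hMherm b a h0U
  have hherm : cM.IsHermitian := by
    apply Matrix.ext
    intro a b
    rw [Matrix.conjTranspose_apply, hcMsymm a b]
    exact star_star _
  -- χ := ψ - quadratic part
  have hQc : ContDiff ℝ (⊤ : ℕ∞)
      (fun w : Fin n → ℂ => ∑ a, ∑ b, cM a b * w a * (starRingEnd ℂ) (w b)) :=
    contDiff_quad cM
  have hχsm : ContDiffOn ℝ (⊤ : ℕ∞)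
      (fun w => ψ w - ∑ a, ∑ b, cM a b * w a * (starRingEnd ℂ) (w b)) (unitBall n) :=
    hψsm.sub hQc.contDiffOn
  have hχd : ∀ z ∈ unitBall n, DifferentiableAt ℝ
      (fun w => ψ w - ∑ a, ∑ b, cM a b * w a * (starRingEnd ℂ) (w b)) z := fun z hz =>
    diffAt_of_contDiffOn hχsm hU hz
  -- representations of first derivatives of χ
  have hRrep : ∀ k : Fin n, Set.EqOn
      (wirtZBar (fun w => ψ w - ∑ a, ∑ b, cM a b * w a * (starRingEnd ℂ) (w b)) k)
      (fun w => wirtZBar ψ k w - ∑ a, cM a k * w a) (unitBall n) := by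
    intro k z hz
    show wirtZBar _ k z = _
    rw [wirtZBar_sub (hψd z hz) ((diff_quad cM) z), wirtZBar_quad]
  have hPrep : ∀ a : Fin n, Set.EqOn
      (wirtZ (fun w => ψ w - ∑ a, ∑ b, cM a b * w a * (starRingEnd ℂ) (w b)) a)
      (fun w => (starRingEnd ℂ) (wirtZBar ψ a w) - ∑ b, cM a b * (starRingEnd ℂ) (w b))
      (unitBall n) := by
    intro a z hz
    show wirtZ _ a z = _
    rw [wirtZ_sub (hψd z hz) ((diff_quad cM) z), wirtZ_quad, hZconjB a hz]
  -- all second derivatives of χ vanish on the ball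
  have hd_lin : ∀ k : Fin n, Differentiable ℝ
      (fun w : Fin n → ℂ => ∑ a, cM a k * w a) := fun k => diff_lin (fun a => cM a k)
  have hRbar0 : ∀ k m : Fin n, ∀ z ∈ unitBall n,
      wirtZBar (wirtZBar (fun w => ψ w - ∑ a, ∑ b, cM a b * w a * (starRingEnd ℂ) (w b)) k)
        m z = 0 := by
    intro k m z hz
    rw [wirtZBar_congr hU hz (hRrep k)]
    rw [wirtZBar_sub (hBd k z hz) ((hd_lin k) z), hC0 k m z hz]
    have := wirtZBar_lin (n := n) (fun a => cM a k) (k := m) (z := z)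
    rw [this, sub_zero]
  have hRz0 : ∀ k m : Fin n, ∀ z ∈ unitBall n,
      wirtZ (wirtZBar (fun w => ψ w - ∑ a, ∑ b, cM a b * w a * (starRingEnd ℂ) (w b)) k)
        m z = 0 := by
    intro k m z hz
    rw [wirtZ_congr hU hz (hRrep k)]
    rw [wirtZ_sub (hBd k z hz) ((hd_lin k) z), hMconst m k z hz]
    have := wirtZ_lin (n := n) (fun a => cM a k) (k := m) (z := z)
    rw [this]
    simp [hcMdef]
  have hPz0 : ∀ a m : Fin n, ∀ z ∈ unitBall n,
      wirtZ (wirtZ (fun w => ψ w - ∑ a, ∑ b, cM a b * w a * (starRingEnd ℂ) (w b)) a)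
        m z = 0 := by
    intro a m z hz
    rw [wirtZ_congr hU hz (hPrep a)]
    rw [wirtZ_sub (diff_conj (hBd a z hz)) ((diff_linbar2 (fun b => cM a b)) z)]
    rw [wirtZ_conj (hBd a z hz), hC0 a m z hz, map_zero]
    have := wirtZ_linbar2 (n := n) (fun b => cM a b) (m := m) (z := z)
    rw [this, sub_zero]
  have hPbar0 : ∀ a m : Fin n, ∀ z ∈ unitBall n,
      wirtZBar (wirtZ (fun w => ψ w - ∑ a, ∑ b, cM a b * w a * (starRingEnd ℂ) (w b)) a)
        m z = 0 := by
    intro a m z hz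
    rw [wirtZBar_congr hU hz (hPrep a)]
    rw [wirtZBar_sub (diff_conj (hBd a z hz)) ((diff_linbar2 (fun b => cM a b)) z)]
    rw [wirtZBar_conj (hBd a z hz), hMconst m a z hz]
    have := wirtZBar_linbar2 (n := n) (fun b => cM a b) (m := m) (z := z)
    rw [this]
    rw [← hcMsymm m a]
    simp [hcMdef]
  -- first derivatives of χ are constant on the ball
  have hZconst : ∀ m : Fin n, ∀ z ∈ unitBall n,
      wirtZ (fun w => ψ w - ∑ a, ∑ b, cM a b * w a * (starRingEnd ℂ) (w b)) m z
        = wirtZ (fun w => ψ w - ∑ a, ∑ b, cM a b * w a * (starRingEnd ℂ) (w b)) m 0 := by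
    intro m z hz
    exact const_of_fderiv_zero hU hconv
      (fun w hw => diffAt_of_contDiffOn (contDiffOn_wirtZ hχsm hU m) hU hw)
      (fun w hw => fderiv_eq_zero_of_wirt
        (diffAt_of_contDiffOn (contDiffOn_wirtZ hχsm hU m) hU hw)
        (fun p => hPz0 m p w hw) (fun p => hPbar0 m p w hw)) hz h0U
  have hZBarconst : ∀ m : Fin n, ∀ z ∈ unitBall n,
      wirtZBar (fun w => ψ w - ∑ a, ∑ b, cM a b * w a * (starRingEnd ℂ) (w b)) m z
        = wirtZBar (fun w => ψ w - ∑ a, ∑ b, cM a b * w a * (starRingEnd ℂ) (w b)) m 0 := by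
    intro m z hz
    exact const_of_fderiv_zero hU hconv
      (fun w hw => diffAt_of_contDiffOn (contDiffOn_wirtZBar hχsm hU m) hU hw)
      (fun w hw => fderiv_eq_zero_of_wirt
        (diffAt_of_contDiffOn (contDiffOn_wirtZBar hχsm hU m) hU hw)
        (fun p => hRz0 m p w hw) (fun p => hRbar0 m p w hw)) hz h0U
  -- fderiv of χ is constant, so χ is affine
  have hfdconst : ∀ z ∈ unitBall n,
      fderiv ℝ (fun w => ψ w - ∑ a, ∑ b, cM a b * w a * (starRingEnd ℂ) (w b)) z
        = fderiv ℝ (fun w => ψ w - ∑ a, ∑ b, cM a b * w a * (starRingEnd ℂ) (w b)) 0 := by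
    intro z hz
    apply clm_eq_basis
    · intro k
      rw [apply_ee, apply_ee, hZconst k z hz, hZBarconst k z hz]
    · intro k
      rw [apply_Iee, apply_Iee, hZconst k z hz, hZBarconst k z hz]
  have haff := eq_affine hU hconv hχd hfdconst h0U
  set L := fderiv ℝ (fun w => ψ w - ∑ a, ∑ b, cM a b * w a * (starRingEnd ℂ) (w b)) 0
    with hLdef
  -- L is real
  have hχreal : (fun w => (starRingEnd ℂ)
        ((fun w => ψ w - ∑ a, ∑ b, cM a b * w a * (starRingEnd ℂ) (w b)) w))
      = fun w => ψ w - ∑ a, ∑ b, cM a b * w a * (starRingEnd ℂ) (w b) := by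
    funext w
    rw [map_sub, hψreal w]
    congr 1
    rw [map_sum]
    have h1 : ∀ a, (starRingEnd ℂ) (∑ b, cM a b * w a * (starRingEnd ℂ) (w b))
        = ∑ b, cM b a * (starRingEnd ℂ) (w a) * w b := by
      intro a
      rw [map_sum]
      apply Finset.sum_congr rfl
      intro b _
      rw [map_mul, map_mul, ← hcMsymm a b, Complex.conj_conj]
    simp only [h1]
    rw [Finset.sum_comm]
    apply Finset.sum_congr rfl
    intro a _
    apply Finset.sum_congr rfl
    intro b _
    ring
  have hLreal : ∀ v, (starRingEnd ℂ) (L v) = L v := by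
    intro v
    have h1 : fderiv ℝ (fun w => (starRingEnd ℂ)
          ((fun w => ψ w - ∑ a, ∑ b, cM a b * w a * (starRingEnd ℂ) (w b)) w)) 0 v
        = (starRingEnd ℂ) (L v) := fderiv_conj (hχd 0 h0U) v
    rw [← h1]
    rw [hχreal]
  -- the affine data
  set av : Fin n → ℂ := fun k => L (ee k) with havdef
  set bv : Fin n → ℂ := fun k => L (Complex.I • ee k) with hbvdef
  have him_a : ∀ k, (av k).im = 0 := fun k => Complex.conj_eq_iff_im.1 (hLreal _)
  have him_b : ∀ k, (bv k).im = 0 := fun k => Complex.conj_eq_iff_im.1 (hLreal _)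
  have hLv : ∀ v : Fin n → ℂ, L v
      = ∑ k, ((((v k).re : ℝ) : ℂ) * av k + (((v k).im : ℝ) : ℂ) * bv k) := by
    intro v
    conv_lhs => rw [decomp v]
    rw [map_sum]
    apply Finset.sum_congr rfl
    intro k _
    rw [map_add, _root_.map_smul, _root_.map_smul]
    simp [Complex.real_smul]; rfl
  have hre : ∀ v : Fin n → ℂ,
      (((∑ k, (av k - Complex.I * bv k) * v k).re : ℝ) : ℂ) = L v := by
    intro v
    rw [hLv v, Complex.re_sum, Complex.ofReal_sum]
    apply Finset.sum_congr rfl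
    intro k _
    have h1 := him_a k
    have h2 := him_b k
    have hval : ((av k - Complex.I * bv k) * v k).re
        = (v k).re * (av k).re + (v k).im * (bv k).re := by
      simp [Complex.mul_re, Complex.mul_im, Complex.sub_re, Complex.sub_im,
        Complex.I_re, Complex.I_im, h1, h2]
      ring
    rw [hval]
    have ha : av k = (((av k).re : ℝ) : ℂ) := by
      apply Complex.ext <;> simp [h1]
    have hb : bv k = (((bv k).re : ℝ) : ℂ) := by
      apply Complex.ext <;> simp [h2]
    rw [ha, hb]
    push_cast
    simp
  -- the constant
  have hψ0 : ((((ψ 0).re : ℝ)) : ℂ) = ψ 0 := by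
    have := Complex.conj_eq_iff_im.1 (hψreal 0)
    apply Complex.ext <;> simp [this]
  refine ⟨cM, hherm, fun k => av k - Complex.I * bv k, (ψ 0).re, ?_⟩
  intro z hz
  have h3 := haff z hz
  have hQ0 : (∑ a, ∑ b, cM a b * (0 : Fin n → ℂ) a * (starRingEnd ℂ) ((0 : Fin n → ℂ) b))
      = 0 := by simp
  rw [sub_zero] at h3
  -- h3 : χ z = χ 0 + L z
  rw [hre z, hψ0]
  simp only [hQ0, sub_zero] at h3
  linear_combination h3
end Recover

end Wirt

open Wirt

/-- for smooth `φ : 𝔹ⁿ → ℝ` with `{φ > 0}` nonempty, the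
components `(1 − |z|²)(∂φ/∂z̄ⱼ − zⱼ Σ_l z̄_l ∂φ/∂z̄_l)` of the gradient field of
`φ` w.r.t. the complex hyperbolic metric are all holomorphic on `𝔹ⁿ` iff
`(1 − |z|²) φ(z) = Σ c_{jk} z_j z̄_k + Re Σ α_k z_k + γ` for a Hermitian matrix
`c`, complex constants `α` and a real constant `γ`. -/
theorem stmt4 (n : ℕ) (hn : 2 ≤ n) (φ : (Fin n → ℂ) → ℝ)
    (hφ : ContDiffOn ℝ (⊤ : ℕ∞) φ (unitBall n))
    (hpos : ∃ z ∈ unitBall n, 0 < φ z) :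
    (∀ j : Fin n,
      DifferentiableOn ℂ
        (fun z =>
          ((1 - normSq' z : ℝ) : ℂ) *
            (wirtZBarR φ j z -
              z j * ∑ l, (starRingEnd ℂ) (z l) * wirtZBarR φ l z)) (unitBall n)) ↔
      ∃ c : Matrix (Fin n) (Fin n) ℂ, c.IsHermitian ∧
        ∃ α : Fin n → ℂ, ∃ γ : ℝ,
          ∀ z ∈ unitBall n,
            (((1 - normSq' z) * φ z : ℝ) : ℂ) =
              (∑ j, ∑ k, c j k * z j * (starRingEnd ℂ) (z k)) +
                (((∑ k, α k * z k).re : ℝ) : ℂ) + (γ : ℂ) := by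
  have hU : IsOpen (unitBall n) := isOpen_unitBall
  have hconv : Convex ℝ (unitBall n) := convex_unitBall
  have h0U : (0 : Fin n → ℂ) ∈ unitBall n := zero_mem_unitBall
  set ψ : (Fin n → ℂ) → ℂ := fun w => (((1 - normSq' w) * φ w : ℝ) : ℂ) with hψdef
  have hψsm : ContDiffOn ℝ (⊤ : ℕ∞) ψ (unitBall n) := contDiffOn_psi hφ
  have hψd : ∀ z ∈ unitBall n, DifferentiableAt ℝ ψ z := fun z hz =>
    diffAt_of_contDiffOn hψsm hU hz
  have hφd : ∀ z ∈ unitBall n, DifferentiableAt ℝ φ z := fun z hz =>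
    (hφ.differentiableOn (by simp)).differentiableAt (hU.mem_nhds hz)
  have hGF : ∀ (j : Fin n), ∀ z ∈ unitBall n,
      ((1 - normSq' z : ℝ) : ℂ) *
          (wirtZBarR φ j z - z j * ∑ l, (starRingEnd ℂ) (z l) * wirtZBarR φ l z)
        = wirtZBar ψ j z + z j * (ψ z - ∑ l, (starRingEnd ℂ) (z l) * wirtZBar ψ l z) :=
    fun j z hz => G_eq_F (hφd z hz) j
  constructor
  · -- hard direction
    intro hHolo
    have hBd : ∀ l : Fin n, ∀ z ∈ unitBall n, DifferentiableAt ℝ (wirtZBar ψ l) z :=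
      fun l z hz => diffAt_of_contDiffOn (contDiffOn_wirtZBar hψsm hU l) hU hz
    have hHd : ∀ z ∈ unitBall n, DifferentiableAt ℝ
        (fun w => ψ w - ∑ l, (starRingEnd ℂ) (w l) * wirtZBar ψ l w) z := fun z hz =>
      (hψd z hz).sub (DifferentiableAt.fun_sum fun l _ =>
        ((diff_coord_conj l) z).mul (hBd l z hz))
    have hFholo : ∀ j : Fin n, DifferentiableOn ℂ
        (fun w => wirtZBar ψ j w
          + w j * (ψ w - ∑ l, (starRingEnd ℂ) (w l) * wirtZBar ψ l w)) (unitBall n) := by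
      intro j
      apply (hHolo j).congr
      intro z hz
      exact (hGF j z hz).symm
    have hexp : ∀ j k : Fin n, ∀ z ∈ unitBall n,
        wirtZBar (wirtZBar ψ j) k z
          = z j * (∑ l, (starRingEnd ℂ) (z l) * wirtZBar (wirtZBar ψ l) k z) := by
      intro j k z hz
      have h0 : wirtZBar (fun w => wirtZBar ψ j w
          + w j * (ψ w - ∑ l, (starRingEnd ℂ) (w l) * wirtZBar ψ l w)) k z = 0 :=
        wirtZBar_of_holo (((hFholo j) z hz).differentiableAt (hU.mem_nhds hz))
      have hHw : wirtZBar (fun w => ψ w - ∑ l, (starRingEnd ℂ) (w l) * wirtZBar ψ l w) k z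
          = - (∑ l, (starRingEnd ℂ) (z l) * wirtZBar (wirtZBar ψ l) k z) := by
        rw [wirtZBar_sub (hψd z hz) (DifferentiableAt.fun_sum fun l _ =>
          ((diff_coord_conj l) z).fun_mul (hBd l z hz))]
        rw [wirtZBar_sum Finset.univ _ (fun l _ => ((diff_coord_conj l) z).fun_mul (hBd l z hz))]
        have hterm : ∀ l : Fin n,
            wirtZBar (fun w => (starRingEnd ℂ) (w l) * wirtZBar ψ l w) k z
              = (starRingEnd ℂ) (z l) * wirtZBar (wirtZBar ψ l) k z
                + wirtZBar ψ l z * (if l = k then 1 else 0) := by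
          intro l
          rw [wirtZBar_mul ((diff_coord_conj l) z) (hBd l z hz), wirtZBar_coord_conj l]
        rw [Finset.sum_congr rfl (fun l _ => hterm l), Finset.sum_add_distrib]
        have hite : (∑ l, wirtZBar ψ l z * (if l = k then 1 else 0)) = wirtZBar ψ k z := by
          rw [Finset.sum_congr rfl
            (fun l _ => by rw [mul_ite, mul_one, mul_zero] :
              ∀ l ∈ Finset.univ, wirtZBar ψ l z * (if l = k then 1 else 0)
                = if l = k then wirtZBar ψ l z else 0)]
          simp
        rw [hite]
        ring
      have hFexp : wirtZBar (fun w => wirtZBar ψ j w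
            + w j * (ψ w - ∑ l, (starRingEnd ℂ) (w l) * wirtZBar ψ l w)) k z
          = wirtZBar (wirtZBar ψ j) k z
            + z j * wirtZBar (fun w => ψ w
              - ∑ l, (starRingEnd ℂ) (w l) * wirtZBar ψ l w) k z := by
        rw [wirtZBar_add (hBd j z hz) ((diff_coord j z).fun_mul (hHd z hz)),
          wirtZBar_mul (diff_coord j z) (hHd z hz), wirtZBar_coord j]
        ring
      rw [hFexp, hHw] at h0
      linear_combination h0
    have hA0 : ∀ k : Fin n, ∀ z ∈ unitBall n,
        (∑ l, (starRingEnd ℂ) (z l) * wirtZBar (wirtZBar ψ l) k z) = 0 := by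
      intro k z hz
      have hself : (∑ l, (starRingEnd ℂ) (z l) * wirtZBar (wirtZBar ψ l) k z)
          = ((normSq' z : ℝ) : ℂ)
            * (∑ l, (starRingEnd ℂ) (z l) * wirtZBar (wirtZBar ψ l) k z) := by
        conv_lhs => rw [Finset.sum_congr rfl (fun l _ => by
          rw [hexp l k z hz] :
            ∀ l ∈ Finset.univ, (starRingEnd ℂ) (z l) * wirtZBar (wirtZBar ψ l) k z
              = (starRingEnd ℂ) (z l) * (z l
                  * (∑ m, (starRingEnd ℂ) (z m) * wirtZBar (wirtZBar ψ m) k z)))]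
        rw [show (∑ l, (starRingEnd ℂ) (z l) * (z l
            * (∑ m, (starRingEnd ℂ) (z m) * wirtZBar (wirtZBar ψ m) k z)))
          = (∑ l, z l * (starRingEnd ℂ) (z l))
            * (∑ m, (starRingEnd ℂ) (z m) * wirtZBar (wirtZBar ψ m) k z) by
          rw [Finset.sum_mul]
          apply Finset.sum_congr rfl
          intro l _
          ring]
        rw [← congrFun normSq'_ofReal z]
      have hne : (1 - ((normSq' z : ℝ) : ℂ)) ≠ 0 := by
        have hlt : normSq' z < 1 := hz
        intro hcontra
        have h4 : ((1 - normSq' z : ℝ) : ℂ) = 0 := by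
          push_cast
          linear_combination hcontra
        rw [Complex.ofReal_eq_zero] at h4
        linarith
      have hfac : (1 - ((normSq' z : ℝ) : ℂ))
          * (∑ l, (starRingEnd ℂ) (z l) * wirtZBar (wirtZBar ψ l) k z) = 0 := by
        linear_combination hself
      exact (mul_eq_zero.1 hfac).resolve_left hne
    have hC0 : ∀ a b : Fin n, ∀ z ∈ unitBall n, wirtZBar (wirtZBar ψ a) b z = 0 := by
      intro a b z hz
      rw [hexp a b z hz, hA0 b z hz, mul_zero]
    exact main_recover ψ hψsm (fun w => Complex.conj_ofReal _) hC0
  · -- easy direction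
    rintro ⟨c, hherm, α, γ, hid⟩
    intro j
    have hconj_c : ∀ a b, (starRingEnd ℂ) (c a b) = c b a := by
      intro a b
      have := congrFun (congrFun hherm.eq b) a
      rw [Matrix.conjTranspose_apply] at this
      exact this
    set Qf : (Fin n → ℂ) → ℂ := fun w =>
      (∑ a, ∑ b, c a b * w a * (starRingEnd ℂ) (w b)) +
        (((∑ b, α b * w b).re : ℝ) : ℂ) + (γ : ℂ) with hQfdef
    have hidU : Set.EqOn ψ Qf (unitBall n) := fun z hz => hid z hz
    have hQfd : Differentiable ℝ Qf :=
      (((diff_quad c).add (diff_rePart α)).add (differentiable_const _))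
    -- the value of ∂̄ₗ ψ on the ball
    have hW : ∀ (l : Fin n), ∀ z ∈ unitBall n,
        wirtZBar ψ l z = (∑ a, c a l * z a) + (starRingEnd ℂ) (α l) / 2 := by
      intro l z hz
      rw [wirtZBar_congr hU hz hidU]
      rw [hQfdef]
      rw [wirtZBar_add (((diff_quad c).fun_add (diff_rePart α)) z) (differentiableAt_const _),
        wirtZBar_add ((diff_quad c) z) ((diff_rePart α) z),
        wirtZBar_quad, wirtZBar_rePart, wirtZBar_const, add_zero]
    -- the claimed holomorphic form
    set P : (Fin n → ℂ) → ℂ := fun z =>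
      ((∑ a, c a j * z a) + (starRingEnd ℂ) (α j) / 2) +
        z j * ((1/2 : ℂ) * (∑ b, α b * z b) + (γ : ℂ)) with hPdef
    have hPholo : DifferentiableOn ℂ P (unitBall n) := by
      apply DifferentiableOn.add
      · exact (((Differentiable.fun_sum fun a _ =>
          ((diffC_coord a).const_mul (c a j))).add
            (differentiable_const _))).differentiableOn
      · exact ((diffC_coord j).mul
          (((Differentiable.fun_sum fun b _ =>
            ((diffC_coord b).const_mul (α b))).const_mul _).add
              (differentiable_const _))).differentiableOn
    have hEq : Set.EqOn (fun z =>
        ((1 - normSq' z : ℝ) : ℂ) *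
          (wirtZBarR φ j z - z j * ∑ l, (starRingEnd ℂ) (z l) * wirtZBarR φ l z))
        P (unitBall n) := by
      intro z hz
      have h1 := hGF j z hz
      show ((1 - normSq' z : ℝ) : ℂ) *
          (wirtZBarR φ j z - z j * ∑ l, (starRingEnd ℂ) (z l) * wirtZBarR φ l z) = P z
      rw [h1, hW j z hz]
      have hsum : ∑ l, (starRingEnd ℂ) (z l) * wirtZBar ψ l z
          = (∑ a, ∑ b, c a b * z a * (starRingEnd ℂ) (z b))
            + (starRingEnd ℂ) (∑ b, α b * z b) / 2 := by
        calc ∑ l, (starRingEnd ℂ) (z l) * wirtZBar ψ l z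
            = ∑ l, ((starRingEnd ℂ) (z l) * (∑ a, c a l * z a)
                + (starRingEnd ℂ) (α l) * (starRingEnd ℂ) (z l) / 2) := by
              apply Finset.sum_congr rfl
              intro l _
              rw [hW l z hz]; ring
          _ = (∑ l, (starRingEnd ℂ) (z l) * (∑ a, c a l * z a))
                + ∑ l, (starRingEnd ℂ) (α l) * (starRingEnd ℂ) (z l) / 2 :=
              Finset.sum_add_distrib
          _ = (∑ a, ∑ b, c a b * z a * (starRingEnd ℂ) (z b))
                + (starRingEnd ℂ) (∑ b, α b * z b) / 2 := by
              congr 1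
              · rw [Finset.sum_comm]
                apply Finset.sum_congr rfl
                intro a _
                rw [Finset.mul_sum]
                apply Finset.sum_congr rfl
                intro b _
                ring
              · rw [map_sum, Finset.sum_div]
                apply Finset.sum_congr rfl
                intro b _
                rw [map_mul]
      rw [hsum]
      have hψz : ψ z = (∑ a, ∑ b, c a b * z a * (starRingEnd ℂ) (z b))
          + (((∑ b, α b * z b).re : ℝ) : ℂ) + (γ : ℂ) := hid z hz
      rw [hψz, re_cast_eq]
      rw [hPdef]
      ring
    exact hPholo.congr hEq
end
end
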